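/- arXiv:1507.00380 — 5 statements merged into one kernel-verified Lean document; each statement's English description precedes it below -/
import Mathlib

section
/- Let I_C ⊆ R be a saturated homogeneous ideal of height c, let I_S ⊆ I_C be a homogeneous ideal such that R/I_S is Cohen–Macaulay of height c−1, and let f ∈ R be a homogeneous form of degree d that is a nonzerodivisor on R/I_S. Set I = f·I_C + I_S. Then there is an exact sequence of graded R-modules 0 → I_S(−d) → I_C(−d) ⊕ I_S → I → 0, where the first map sends g ↦ (g, f·g) and the second map sends (a,b) ↦ f·a − b. -/
/- ------------------------------------------------------------------
   Common definitions
------------------------------------------------------------------ -/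

open MvPolynomial CategoryTheory

noncomputable section

/-- The height of an ideal: the infimum of the heights of the prime ideals containing it. -/
noncomputable def idealHeight {A : Type*} [CommRing A] (I : Ideal A) : ℕ∞ :=
  ⨅ P ∈ {P : PrimeSpectrum A | I ≤ P.asIdeal}, Order.height P

/-- The depth of a module `M` with respect to an ideal `J`: the supremum of the lengths of
`M`-regular sequences consisting of elements of `J`. -/
noncomputable def idealDepth {A : Type*} [CommRing A] (J : Ideal A)
    (M : Type*) [AddCommGroup M] [Module A M] : ℕ∞ :=
  sSup {n : ℕ∞ | ∃ rs : List A, (rs.length : ℕ∞) = n ∧ (∀ r ∈ rs, r ∈ J) ∧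
    RingTheory.Sequence.IsRegular M rs}

/-- The irrelevant maximal ideal `(x_i : i ∈ σ)` of the polynomial ring `k[x_i : i ∈ σ]`. -/
def irrelevantIdeal (k : Type) [Field k] (σ : Type) : Ideal (MvPolynomial σ k) :=
  Ideal.span (Set.range (X : σ → MvPolynomial σ k))

/-- The quotient of a polynomial ring by an ideal `I` is Cohen–Macaulay if its depth with
respect to the irrelevant maximal ideal equals its Krull dimension. -/
def IsCMQuotient {k : Type} [Field k] {σ : Type} (I : Ideal (MvPolynomial σ k)) : Prop :=
  (idealDepth (irrelevantIdeal k σ) (MvPolynomial σ k ⧸ I) : WithBot ℕ∞)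
    = ringKrullDim (MvPolynomial σ k ⧸ I)

/-- An ideal of a polynomial ring is homogeneous if it contains all homogeneous components
of each of its elements. -/
def IsHomogeneousIdeal {k : Type} [Field k] {σ : Type} (I : Ideal (MvPolynomial σ k)) : Prop :=
  ∀ p ∈ I, ∀ i : ℕ, homogeneousComponent i p ∈ I

/-- The Hilbert function of `R/I`, `t ↦ dim_k [R/I]_t`, as a function `ℤ → ℤ`
(equal to `0` in negative degrees). -/
noncomputable def hilbertFn (k : Type) [Field k] {σ : Type} (I : Ideal (MvPolynomial σ k))
    (t : ℤ) : ℤ :=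
  if t < 0 then 0
  else
    (Module.finrank k (homogeneousSubmodule σ k t.toNat) : ℤ) -
    (Module.finrank k
      ((Submodule.restrictScalars k (I : Submodule (MvPolynomial σ k) (MvPolynomial σ k))) ⊓
        homogeneousSubmodule σ k t.toNat : Submodule k (MvPolynomial σ k)) : ℤ)

/-- `P` is the Hilbert polynomial of `R/I` if it agrees with the Hilbert function of `R/I`
in all sufficiently large degrees. -/
def IsHilbertPolyOf (k : Type) [Field k] {σ : Type} (I : Ideal (MvPolynomial σ k))
    (P : Polynomial ℚ) : Prop :=
  ∃ N : ℤ, ∀ t : ℤ, N ≤ t → (hilbertFn k I t : ℚ) = P.eval (t : ℚ)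

open Classical in
/-- The Hilbert polynomial of `R/I` (defined as `0` if none exists). -/
noncomputable def hilbertPoly (k : Type) [Field k] {σ : Type} (I : Ideal (MvPolynomial σ k)) :
    Polynomial ℚ :=
  if h : ∃ P : Polynomial ℚ, IsHilbertPolyOf k I P then h.choose else 0

/-- The multiplicity (degree) `e(R/I)`: `(δ-1)!` times the leading coefficient of the Hilbert
polynomial of `R/I`, whose degree is `δ - 1` where `δ = dim R/I ≥ 1`. -/
noncomputable def multiplicityDeg (k : Type) [Field k] {σ : Type}
    (I : Ideal (MvPolynomial σ k)) : ℚ :=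
  (Nat.factorial (hilbertPoly k I).natDegree) * (hilbertPoly k I).leadingCoeff

/-- The `m`-th symbolic power of an ideal `J`:
`J^{(m)} = ⋂_{P ∈ Ass(A/J)} (J^m A_P ∩ A)`. -/
noncomputable def symbolicPower {A : Type*} [CommRing A] (J : Ideal A) (m : ℕ) : Ideal A :=
  sInf { K : Ideal A | ∃ (P : Ideal A) (hP : IsAssociatedPrime P (A ⧸ J)),
    K = Ideal.comap (algebraMap A (Localization (@Ideal.primeCompl A _ P hP.1)))
          (Ideal.map (algebraMap A (Localization (@Ideal.primeCompl A _ P hP.1))) (J ^ m)) }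

/-- `α(I)`: the least degree of a nonzero form in `I`. -/
noncomputable def alphaDeg (k : Type) [Field k] {σ : Type} (I : Ideal (MvPolynomial σ k)) : ℕ :=
  sInf {d : ℕ | ∃ p ∈ I, p ≠ 0 ∧ MvPolynomial.IsHomogeneous p d}

/-- `dim_k Tor_i^A(M, N)`, the rank over the base field `k` of the Tor module. -/
noncomputable def torRank (k : Type) [Field k] (A : Type) [CommRing A] [Algebra k A]
    (M N : Type) [AddCommGroup M] [Module A M] [AddCommGroup N] [Module A N] (i : ℕ) :
    Cardinal :=
  Module.rank k (RestrictScalars k A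
    (((Tor (ModuleCat A) i).obj (ModuleCat.of A M)).obj (ModuleCat.of A N)))

/-- The `i`-th total Betti number `dim_k Tor_i(S/I, k)` of `S/I`, where
`k = S/(x_i : i ∈ σ)`. -/
noncomputable def bettiNum (k : Type) [Field k] {σ : Type} (I : Ideal (MvPolynomial σ k))
    (i : ℕ) : Cardinal :=
  torRank k (MvPolynomial σ k) (MvPolynomial σ k ⧸ I)
    (MvPolynomial σ k ⧸ irrelevantIdeal k σ) i

/-- The first map `I_S → I_C ⊕ I_S`, `g ↦ (g, f·g)`, of the basic double linkage sequence. -/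
def bdlFirstMap {A : Type*} [CommRing A] {I_S I_C : Ideal A} (h : I_S ≤ I_C) (f : A) :
    I_S →ₗ[A] I_C × I_S :=
  LinearMap.prod (Submodule.inclusion h) (f • LinearMap.id)

/-- The second map `I_C ⊕ I_S → f·I_C + I_S`, `(a, b) ↦ f·a - b`, of the basic double
linkage sequence. -/
def bdlSecondMap {A : Type*} [CommRing A] (I_C I_S : Ideal A) (f : A) :
    I_C × I_S →ₗ[A] ↥(Ideal.span {f} * I_C + I_S) :=
  LinearMap.coprod
    (LinearMap.codRestrict ((Ideal.span {f} * I_C + I_S : Ideal A) : Submodule A A)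
      (f • (Submodule.subtype (I_C : Submodule A A)))
      (fun c => Submodule.mem_sup_left
        (Ideal.mul_mem_mul (Ideal.mem_span_singleton_self f) c.2)))
    (- LinearMap.codRestrict ((Ideal.span {f} * I_C + I_S : Ideal A) : Submodule A A)
      (Submodule.subtype (I_S : Submodule A A))
      (fun c => Submodule.mem_sup_right c.2))

/-- The ideal `I_{V_{λ,c}}` of the codimension-`c` configuration determined by `f_1, …, f_s`:
the intersection of the ideals `(f_{i_1}, …, f_{i_c})` over all `c`-subsets. -/
def configIdeal {A : Type*} [CommRing A] {s : ℕ} (c : ℕ) (f : Fin s → A) : Ideal A :=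
  ⨅ T ∈ {T : Finset (Fin s) | T.card = c}, Ideal.span (f '' ↑T)

/-- Every sublist of at most `m` of the elements `f 1, …, f s` (in any order, without
repetitions) is a regular sequence. -/
def SubsetsRegular {A : Type*} [CommRing A] {s : ℕ} (f : Fin s → A) (m : ℕ) : Prop :=
  ∀ l : List (Fin s), l.Nodup → l.length ≤ m →
    RingTheory.Sequence.IsRegular A (l.map f)

/-- `Δ` is (the independence complex of) a matroid on `{1, …, s}`: a nonempty collection of
subsets closed under inclusion and satisfying the augmentation axiom. -/
def IsMatroid {s : ℕ} (Δ : Finset (Fin s) → Prop) : Prop :=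
  Δ ∅ ∧ (∀ F G : Finset (Fin s), Δ F → G ⊆ F → Δ G) ∧
    (∀ F G : Finset (Fin s), Δ F → Δ G → G.card < F.card →
      ∃ j ∈ F, j ∉ G ∧ Δ (insert j G))

/-- `F` is a basis (facet) of the simplicial complex `Δ`: a maximal face. -/
def IsBasisOf {s : ℕ} (Δ : Finset (Fin s) → Prop) (F : Finset (Fin s)) : Prop :=
  Δ F ∧ ∀ G : Finset (Fin s), Δ G → F ⊆ G → G = F

/-- The Stanley–Reisner ideal of `Δ`, generated by the squarefree monomials corresponding
to the non-faces of `Δ`. -/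
def stanleyReisnerIdeal (k : Type) [Field k] {s : ℕ} (Δ : Finset (Fin s) → Prop) :
    Ideal (MvPolynomial (Fin s) k) :=
  Ideal.span
    ((fun F : Finset (Fin s) => ∏ i ∈ F, (X i : MvPolynomial (Fin s) k)) '' {F | ¬ Δ F})

/-- The ideal `I_{W_c}`: the intersection of all ideals `(A_{i_1,j_1}, …, A_{i_c,j_c})`
where `i_1 < ⋯ < i_c` and each generator is chosen from a different group. -/
def multiPartiteIdeal {A : Type*} [CommRing A] {s : ℕ} (c : ℕ) {e : Fin s → ℕ}
    (g : (i : Fin s) → Fin (e i) → A) : Ideal A :=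
  ⨅ T ∈ {T : Finset (Fin s) | T.card = c}, ⨅ j : (i : Fin s) → Fin (e i),
    Ideal.span ((fun i => g i (j i)) '' ↑T)

end

set_option synthInstance.maxHeartbeats 1000000 in
set_option maxHeartbeats 1000000 in
/-- The basic double linkage short exact sequence
`0 → I_S(−d) → I_C(−d) ⊕ I_S → I → 0`. -/
theorem statement1 (k : Type) [Field k] [Infinite k] (n c : ℕ) (hc : 1 ≤ c)
    (I_C I_S : Ideal (MvPolynomial (Fin (n + 1)) k))
    (homC : IsHomogeneousIdeal I_C)
    (satC : Submodule.colon (I_C : Submodule (MvPolynomial (Fin (n + 1)) k)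
        (MvPolynomial (Fin (n + 1)) k)) (irrelevantIdeal k (Fin (n + 1))) = I_C)
    (htC : idealHeight I_C = (c : ℕ∞))
    (hSC : I_S ≤ I_C) (homS : IsHomogeneousIdeal I_S)
    (htS : idealHeight I_S = ((c - 1 : ℕ) : ℕ∞))
    (cmS : IsCMQuotient I_S)
    (f : MvPolynomial (Fin (n + 1)) k) (d : ℕ) (hf : f.IsHomogeneous d)
    (hnzd : ∀ g, f * g ∈ I_S → g ∈ I_S) :
    Function.Injective (bdlFirstMap hSC f) ∧
      Function.Exact (bdlFirstMap hSC f) (bdlSecondMap I_C I_S f) ∧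
      Function.Surjective (bdlSecondMap I_C I_S f) := by
  refine ⟨?_, ?_, ?_⟩
  · intro g h hgh
    simp only [bdlFirstMap, LinearMap.prod_apply, Function.prod, Prod.mk.injEq] at hgh
    have h1 := congrArg Subtype.val hgh.1
    exact Subtype.ext h1
  · rintro ⟨a, b⟩
    constructor
    · intro h0
      have hv : f * (a : MvPolynomial (Fin (n+1)) k) - (b : MvPolynomial (Fin (n+1)) k) = 0 := by
        have := congrArg Subtype.val h0
        simpa [bdlSecondMap, sub_eq_add_neg, smul_eq_mul] using this
      have heq : f * (a : MvPolynomial (Fin (n+1)) k) = (b : MvPolynomial (Fin (n+1)) k) :=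
        sub_eq_zero.mp hv
      have haS : (a : MvPolynomial (Fin (n+1)) k) ∈ I_S := hnzd _ (heq ▸ b.2)
      refine ⟨⟨(a : MvPolynomial (Fin (n+1)) k), haS⟩, ?_⟩
      refine Prod.ext (Subtype.ext ?_) (Subtype.ext ?_)
      · rfl
      · simpa [bdlFirstMap, smul_eq_mul] using heq
    · rintro ⟨g, hg⟩
      rw [← hg]
      apply Subtype.ext
      simp [bdlFirstMap, bdlSecondMap, smul_eq_mul, sub_eq_add_neg]
  · rintro ⟨x, hx⟩
    obtain ⟨y, hy, z, hz, rfl⟩ := Submodule.mem_sup.mp hx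
    obtain ⟨a, ha, rfl⟩ := Ideal.mem_span_singleton_mul.mp hy
    refine ⟨(⟨a, ha⟩, ⟨-z, neg_mem hz⟩), ?_⟩
    apply Subtype.ext
    simp [bdlSecondMap, smul_eq_mul, sub_eq_add_neg]
end

section
/- Let I_C ⊆ R be a saturated homogeneous ideal of height c, let I_S ⊆ I_C be a homogeneous ideal such that R/I_S is Cohen–Macaulay of height c−1, and let f ∈ R be a homogeneous form of degree d that is a nonzerodivisor on R/I_S. Set I = f·I_C + I_S. Then for every integer t, the Hilbert functions satisfy h_{R/I}(t) = h_{R/I_S}(t) − h_{R/I_S}(t−d) + h_{R/I_C}(t−d). -/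
/- ------------------------------------------------------------------
   Common definitions
------------------------------------------------------------------ -/

open MvPolynomial CategoryTheory

noncomputable section BDLAux

variable {k : Type} [Field k] {σ : Type}

/-- Homogeneous component of a product with a homogeneous polynomial. -/
theorem homogComp_mul {f : MvPolynomial σ k} {d : ℕ} (hf : f.IsHomogeneous d)
    (g : MvPolynomial σ k) (m : ℕ) :
    homogeneousComponent m (f * g)
      = if d ≤ m then f * homogeneousComponent (m - d) g else 0 := by
  conv_lhs => rw [← sum_homogeneousComponent g, Finset.mul_sum, map_sum]
  have key : ∀ i, homogeneousComponent m (f * homogeneousComponent i g)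
      = if m = d + i then f * homogeneousComponent i g else 0 := fun i =>
    homogeneousComponent_of_mem ((mem_homogeneousSubmodule _ _).2
      (hf.mul (homogeneousComponent_isHomogeneous i g)))
  simp_rw [key]
  by_cases hdm : d ≤ m
  · rw [if_pos hdm]
    by_cases hmem : m - d ≤ g.totalDegree
    · rw [Finset.sum_eq_single (m - d)]
      · rw [if_pos (by omega)]
      · intro i _ hi; rw [if_neg (by omega)]
      · intro h; exact absurd (Finset.mem_range.2 (by omega)) h
    · rw [homogeneousComponent_eq_zero _ g (by omega), mul_zero]
      refine Finset.sum_eq_zero fun i hi => ?_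
      rw [if_neg (by simp only [Finset.mem_range] at hi; omega)]
  · rw [if_neg hdm]
    refine Finset.sum_eq_zero fun i hi => if_neg (by omega)

theorem hsub_fd [Finite σ] (m : ℕ) :
    FiniteDimensional k (homogeneousSubmodule σ k m) :=
  Submodule.finiteDimensional_of_le (S₂ := restrictTotalDegree σ k m)
    (fun p hp => (mem_restrictTotalDegree σ m p).2
      ((mem_homogeneousSubmodule _ _).1 hp).totalDegree_le)

end BDLAux

noncomputable section BDL2
variable {k : Type} [Field k] {σ : Type}

/-- Dimension of the degree-`m` piece of `J`. -/
noncomputable def wdim (k : Type) [Field k] {σ : Type} (J : Ideal (MvPolynomial σ k)) (m : ℕ) : ℕ :=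
  Module.finrank k
    ((Submodule.restrictScalars k (J : Submodule (MvPolynomial σ k) (MvPolynomial σ k))) ⊓
      homogeneousSubmodule σ k m : Submodule k (MvPolynomial σ k))

theorem keyB [Finite σ] {I_C I_S : Ideal (MvPolynomial σ k)}
    (homS : IsHomogeneousIdeal I_S)
    {f : MvPolynomial σ k} {d : ℕ} (hf : f.IsHomogeneous d)
    {m : ℕ} (hm : m < d) :
    wdim k (Ideal.span {f} * I_C + I_S) m = wdim k I_S m := by
  unfold wdim
  have hEq : (Submodule.restrictScalars k
      ((Ideal.span {f} * I_C + I_S : Ideal (MvPolynomial σ k)) :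
        Submodule (MvPolynomial σ k) (MvPolynomial σ k))) ⊓ homogeneousSubmodule σ k m
      = (Submodule.restrictScalars k
          (I_S : Submodule (MvPolynomial σ k) (MvPolynomial σ k))) ⊓
        homogeneousSubmodule σ k m := by
    apply le_antisymm
    · rintro x hx
      obtain ⟨hxI, hxm⟩ := Submodule.mem_inf.1 hx
      obtain ⟨y, hy, s, hs, rfl⟩ := Submodule.mem_sup.1 hxI
      obtain ⟨g, hg, rfl⟩ := Ideal.mem_span_singleton_mul.1 hy
      have hx' : homogeneousComponent m (f * g + s) = f * g + s := by
        rw [homogeneousComponent_of_mem hxm, if_pos rfl]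
      have heq : f * g + s = homogeneousComponent m s := by
        conv_lhs => rw [← hx']
        rw [map_add, homogComp_mul hf, if_neg (by omega), zero_add]
      refine Submodule.mem_inf.2 ⟨?_, hxm⟩
      rw [Submodule.restrictScalars_mem, heq]
      exact homS s hs m
    · refine inf_le_inf ?_ le_rfl
      intro x hx
      rw [Submodule.restrictScalars_mem] at hx ⊢
      exact Submodule.mem_sup_right hx
  rw [hEq]

theorem keyA [Finite σ] {I_C I_S : Ideal (MvPolynomial σ k)}
    (homC : IsHomogeneousIdeal I_C) (homS : IsHomogeneousIdeal I_S) (hSC : I_S ≤ I_C)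
    {f : MvPolynomial σ k} {d : ℕ} (hf : f.IsHomogeneous d)
    (hnzd : ∀ g, f * g ∈ I_S → g ∈ I_S) (m' : ℕ) :
    wdim k (Ideal.span {f} * I_C + I_S) (d + m') + wdim k I_S m'
      = wdim k I_C m' + wdim k I_S (d + m') := by
  classical
  set m := d + m' with hm
  set WC : Submodule k (MvPolynomial σ k) :=
    (Submodule.restrictScalars k (I_C : Submodule (MvPolynomial σ k) (MvPolynomial σ k))) ⊓
      homogeneousSubmodule σ k m' with hWC
  set WS : Submodule k (MvPolynomial σ k) :=
    (Submodule.restrictScalars k (I_S : Submodule (MvPolynomial σ k) (MvPolynomial σ k))) ⊓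
      homogeneousSubmodule σ k m with hWS
  set WS' : Submodule k (MvPolynomial σ k) :=
    (Submodule.restrictScalars k (I_S : Submodule (MvPolynomial σ k) (MvPolynomial σ k))) ⊓
      homogeneousSubmodule σ k m' with hWS'
  set WI : Submodule k (MvPolynomial σ k) :=
    (Submodule.restrictScalars k
      ((Ideal.span {f} * I_C + I_S : Ideal (MvPolynomial σ k)) :
        Submodule (MvPolynomial σ k) (MvPolynomial σ k))) ⊓
      homogeneousSubmodule σ k m with hWI
  haveI := hsub_fd (k := k) (σ := σ) m
  haveI := hsub_fd (k := k) (σ := σ) m'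
  haveI : FiniteDimensional k WC := Submodule.finiteDimensional_of_le inf_le_right
  haveI : FiniteDimensional k WS := Submodule.finiteDimensional_of_le inf_le_right
  haveI : FiniteDimensional k WS' := Submodule.finiteDimensional_of_le inf_le_right
  haveI : FiniteDimensional k WI := Submodule.finiteDimensional_of_le inf_le_right
  have memI : ∀ a b : MvPolynomial σ k, a ∈ WC → b ∈ WS → f * a + b ∈ WI := by
    intro a b ha hb
    obtain ⟨ha1, ha2⟩ := Submodule.mem_inf.1 ha
    obtain ⟨hb1, hb2⟩ := Submodule.mem_inf.1 hb
    refine Submodule.mem_inf.2 ⟨?_, ?_⟩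
    · exact Submodule.add_mem _
        (Submodule.mem_sup_left (Ideal.mul_mem_mul (Ideal.mem_span_singleton_self f) ha1))
        (Submodule.mem_sup_right hb1)
    · exact Submodule.add_mem _
        ((mem_homogeneousSubmodule _ _).2 (hf.mul ((mem_homogeneousSubmodule _ _).1 ha2))) hb2
  let φ : (WC × WS) →ₗ[k] WI :=
    { toFun := fun p => ⟨f * p.1.1 + p.2.1, memI _ _ p.1.2 p.2.2⟩
      map_add' := by
        rintro ⟨⟨a, ha⟩, ⟨b, hb⟩⟩ ⟨⟨a', ha'⟩, ⟨b', hb'⟩⟩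
        apply Subtype.ext
        show f * (a + a') + (b + b') = (f * a + b) + (f * a' + b')
        ring
      map_smul' := by
        rintro c ⟨⟨a, ha⟩, ⟨b, hb⟩⟩
        apply Subtype.ext
        show f * (c • a) + c • b = c • (f * a + b)
        rw [mul_smul_comm, smul_add] }
  have hsurj : Function.Surjective φ := by
    rintro ⟨x, hx⟩
    obtain ⟨hxI, hxm⟩ := Submodule.mem_inf.1 hx
    obtain ⟨y, hy, s, hs, rfl⟩ := Submodule.mem_sup.1 hxI
    obtain ⟨g, hg, rfl⟩ := Ideal.mem_span_singleton_mul.1 hy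
    refine ⟨⟨⟨homogeneousComponent m' g,
        Submodule.mem_inf.2 ⟨homC g hg m', homogeneousComponent_mem m' g⟩⟩,
      ⟨homogeneousComponent m s,
        Submodule.mem_inf.2 ⟨homS s hs m, homogeneousComponent_mem m s⟩⟩⟩, ?_⟩
    apply Subtype.ext
    show f * homogeneousComponent m' g + homogeneousComponent m s = f * g + s
    have hx' : homogeneousComponent m (f * g + s) = f * g + s := by
      rw [homogeneousComponent_of_mem hxm, if_pos rfl]
    conv_rhs => rw [← hx']
    rw [map_add, homogComp_mul hf, if_pos (by omega : d ≤ m),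
      (by omega : m - d = m')]
  let ψ : WS' →ₗ[k] WC × WS :=
    { toFun := fun b =>
        (⟨b.1, Submodule.mem_inf.2 ⟨hSC (Submodule.mem_inf.1 b.2).1, (Submodule.mem_inf.1 b.2).2⟩⟩,
         ⟨-(f * b.1), Submodule.mem_inf.2
            ⟨Submodule.neg_mem _ (Ideal.mul_mem_left _ f (Submodule.mem_inf.1 b.2).1),
             Submodule.neg_mem _ ((mem_homogeneousSubmodule _ _).2
               (hf.mul ((mem_homogeneousSubmodule _ _).1 (Submodule.mem_inf.1 b.2).2)))⟩⟩)
      map_add' := by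
        rintro ⟨b, hb⟩ ⟨b', hb'⟩
        refine Prod.ext (Subtype.ext rfl) (Subtype.ext ?_)
        show -(f * (b + b')) = -(f * b) + -(f * b')
        ring
      map_smul' := by
        rintro c ⟨b, hb⟩
        refine Prod.ext (Subtype.ext rfl) (Subtype.ext ?_)
        show -(f * (c • b)) = c • -(f * b)
        rw [mul_smul_comm, smul_neg] }
  have hinj : Function.Injective ψ := by
    intro x y hxy
    exact Subtype.ext (congrArg (fun p => (p.1 : MvPolynomial σ k)) hxy)
  have hker : LinearMap.ker φ = LinearMap.range ψ := by
    ext ⟨⟨a, ha⟩, ⟨b, hb⟩⟩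
    simp only [LinearMap.mem_ker, LinearMap.mem_range]
    constructor
    · intro h
      have h' : f * a + b = 0 := congrArg Subtype.val h
      have hb' : b = -(f * a) := by linear_combination h'
      have hfa : f * a ∈ I_S := by
        have : f * a = -b := by rw [hb']; ring
        rw [this]
        exact Submodule.neg_mem _ (Submodule.mem_inf.1 hb).1
      have haS : a ∈ WS' :=
        Submodule.mem_inf.2 ⟨hnzd a hfa, (Submodule.mem_inf.1 ha).2⟩
      exact ⟨⟨a, haS⟩, Prod.ext (Subtype.ext rfl) (Subtype.ext hb'.symm)⟩
    · rintro ⟨⟨x, hx⟩, hxy⟩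
      rw [← hxy]
      apply Subtype.ext
      show f * x + -(f * x) = 0
      ring
  have rn := LinearMap.finrank_range_add_finrank_ker φ
  have hrange : LinearMap.range φ = ⊤ := LinearMap.range_eq_top.2 hsurj
  rw [hrange, finrank_top, hker, LinearMap.finrank_range_of_inj hinj] at rn
  have hprod : Module.finrank k (WC × WS) = Module.finrank k WC + Module.finrank k WS :=
    Module.finrank_prod
  unfold wdim
  rw [← hWI, ← hWS', ← hWC, ← hWS]
  omega

end BDL2

theorem hilbertFn_eq' {k : Type} [Field k] {σ : Type} (J : Ideal (MvPolynomial σ k)) (t : ℤ) :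
    hilbertFn k J t = if t < 0 then 0 else
      (Module.finrank k (homogeneousSubmodule σ k t.toNat) : ℤ) - wdim k J t.toNat := rfl

theorem statement3 (k : Type) [Field k] [Infinite k] (n c : ℕ) (hc : 1 ≤ c)
    (I_C I_S : Ideal (MvPolynomial (Fin (n + 1)) k))
    (homC : IsHomogeneousIdeal I_C)
    (satC : Submodule.colon (I_C : Submodule (MvPolynomial (Fin (n + 1)) k)
        (MvPolynomial (Fin (n + 1)) k)) (irrelevantIdeal k (Fin (n + 1))) = I_C)
    (htC : idealHeight I_C = (c : ℕ∞))
    (hSC : I_S ≤ I_C) (homS : IsHomogeneousIdeal I_S)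
    (htS : idealHeight I_S = ((c - 1 : ℕ) : ℕ∞))
    (cmS : IsCMQuotient I_S)
    (f : MvPolynomial (Fin (n + 1)) k) (d : ℕ) (hf : f.IsHomogeneous d)
    (hnzd : ∀ g, f * g ∈ I_S → g ∈ I_S) :
    ∀ t : ℤ, hilbertFn k (Ideal.span {f} * I_C + I_S) t
      = hilbertFn k I_S t - hilbertFn k I_S (t - d) + hilbertFn k I_C (t - d) := by
  intro t
  simp only [hilbertFn_eq']
  by_cases ht : t < 0
  · have htd : t - (d : ℤ) < 0 := by omega
    rw [if_pos ht, if_pos ht, if_pos htd, if_pos htd]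
    ring
  · rw [if_neg ht, if_neg ht]
    by_cases htd : t - (d : ℤ) < 0
    · rw [if_pos htd, if_pos htd]
      rw [keyB (I_C := I_C) homS hf (show t.toNat < d by omega)]
      ring
    · rw [if_neg htd, if_neg htd]
      have hm : t.toNat = d + (t - (d : ℤ)).toNat := by omega
      have hA := keyA homC homS hSC hf hnzd ((t - (d : ℤ)).toNat)
      have hA' := congrArg (Nat.cast : ℕ → ℤ) hA
      push_cast at hA'
      rw [hm]
      linarith [hA']
end

section
/- Let f_1,…,f_s ∈ R be homogeneous polynomials of degrees d_1,…,d_s such that every subset of at most c+1 of them is an R-regular sequence, where 1 ≤ c ≤ min(n,s) and s > c. Set λ = [d_1,…,d_s] and λ' = [d_1,…,d_{s−1}]. Then for all t, the Hilbert functions satisfy h_{R/I_{V_{λ,c}}}(t) = [h_{R/I_{V_{λ',c−1}}}(t) − h_{R/I_{V_{λ',c−1}}}(t−d_s)] + h_{R/I_{V_{λ',c}}}(t−d_s), where I_{V_{λ',c−1}} and I_{V_{λ',c}} are the configuration ideals built from f_1,…,f_{s−1} in codimensions c−1 and c. -/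
/- ------------------------------------------------------------------
   Common definitions
------------------------------------------------------------------ -/

open MvPolynomial CategoryTheory

open RingTheory.Sequence

section General

variable {A : Type*} [CommRing A]

/-- `x` is a nonzerodivisor modulo the ideal `P`. -/
def NzdMod (x : A) (P : Ideal A) : Prop := ∀ a : A, x * a ∈ P → a ∈ P

lemma nzdMod_of_isWeaklyRegular_append {l : List A} {x : A}
    (h : IsWeaklyRegular A (l ++ [x])) : NzdMod x (Ideal.ofList l) := by
  intro a ha
  rw [isWeaklyRegular_append_iff] at h
  have h2 := (isWeaklyRegular_singleton_iff _ _).mp h.2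
  have key : (Ideal.ofList l • ⊤ : Submodule A A) = Ideal.ofList l := by
    rw [smul_eq_mul, Ideal.mul_top]
  have : (Submodule.Quotient.mk a : A ⧸ (Ideal.ofList l • ⊤ : Submodule A A)) = 0 := by
    apply h2
    show x • (Submodule.Quotient.mk a) = x • (0 : A ⧸ (Ideal.ofList l • ⊤ : Submodule A A))
    rw [smul_zero, ← Submodule.Quotient.mk_smul, smul_eq_mul,
      Submodule.Quotient.mk_eq_zero, smul_eq_mul, Ideal.mul_top]
    exact ha
  rw [Submodule.Quotient.mk_eq_zero, key] at this
  exact this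

end General

section General2

variable {A : Type*} [CommRing A]

lemma nzdMod_inf {x : A} {P Q : Ideal A} (hP : NzdMod x P) (hQ : NzdMod x Q) :
    NzdMod x (P ⊓ Q) := fun a ha => ⟨hP a ha.1, hQ a ha.2⟩

/-- The basic exchange lemma: if `x` is a nonzerodivisor mod `P ⊔ Q` then
`(P + (x)) ∩ (Q + (x)) ⊆ (P ∩ Q) + (x)`. -/
lemma inf_sup_span_singleton_le {P Q : Ideal A} {x : A} (h : NzdMod x (P ⊔ Q)) :
    (P ⊔ Ideal.span {x}) ⊓ (Q ⊔ Ideal.span {x}) ≤ (P ⊓ Q) ⊔ Ideal.span {x} := by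
  rintro g ⟨hg1, hg2⟩
  obtain ⟨p, hp, u, hu, rfl⟩ := Submodule.mem_sup.mp hg1
  obtain ⟨q, hq, v, hv, hqv⟩ := Submodule.mem_sup.mp hg2
  obtain ⟨r, rfl⟩ := Ideal.mem_span_singleton'.mp hu
  obtain ⟨s, rfl⟩ := Ideal.mem_span_singleton'.mp hv
  have hx : x * (s - r) ∈ P ⊔ Q := by
    have : x * (s - r) = p - q := by linear_combination hqv
    rw [this]
    exact Submodule.sub_mem _ (Submodule.mem_sup_left hp) (Submodule.mem_sup_right hq)
  obtain ⟨p', hp', q', hq', hpq⟩ := Submodule.mem_sup.mp (h _ hx)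
  refine Submodule.mem_sup.mpr ⟨p - p' * x, ⟨?_, ?_⟩, (r + p') * x,
    Ideal.mem_span_singleton'.mpr ⟨r + p', rfl⟩, by ring⟩
  · exact Submodule.sub_mem _ hp (Ideal.mul_mem_right _ _ hp')
  · have : p - p' * x = q + q' * x := by linear_combination -hqv - x * hpq
    rw [this]
    exact Submodule.add_mem _ hq (Ideal.mul_mem_right _ _ hq')

end General2

section Config

set_option linter.unusedSectionVars false
set_option linter.unusedVariables false
variable {A : Type*} [CommRing A] {ι : Type*} [DecidableEq ι]

/-- Span of the image of a finite set of indices. -/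
def spanF (f : ι → A) (X : Finset ι) : Ideal A := Ideal.span (f '' ↑X)

lemma spanF_empty (f : ι → A) : spanF f ∅ = ⊥ := by
  simp [spanF]

lemma spanF_insert (f : ι → A) (x : ι) (X : Finset ι) :
    spanF f (insert x X) = Ideal.span {f x} ⊔ spanF f X := by
  rw [spanF, spanF, Finset.coe_insert, Set.image_insert_eq, Ideal.span_insert]

lemma spanF_singleton (f : ι → A) (x : ι) : spanF f {x} = Ideal.span {f x} := by
  rw [spanF]; simp

lemma spanF_union (f : ι → A) (X Y : Finset ι) :
    spanF f (X ∪ Y) = spanF f X ⊔ spanF f Y := by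
  rw [spanF, spanF, spanF, Finset.coe_union, Set.image_union, Ideal.span_union]

lemma spanF_mono (f : ι → A) {X Y : Finset ι} (h : X ⊆ Y) : spanF f X ≤ spanF f Y :=
  Ideal.span_mono (Set.image_mono (Finset.coe_subset.mpr h))

lemma spanF_eq_ofList (f : ι → A) (X : Finset ι) :
    spanF f X = Ideal.ofList (X.toList.map f) := by
  rw [spanF]
  congr 1
  ext z
  simp only [Set.mem_image, Finset.mem_coe, Set.mem_setOf_eq, List.mem_map, Finset.mem_toList]

/-- If appending `x` to the elements of `W` gives a weakly regular sequence, then `f x` is a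
nonzerodivisor modulo the span of the `f`-image of `W`. -/
lemma nzdMod_spanF (f : ι → A) (W : Finset ι) (x : ι) (hx : x ∉ W)
    (h : RingTheory.Sequence.IsWeaklyRegular A ((W.toList ++ [x]).map f)) :
    NzdMod (f x) (spanF f W) := by
  rw [spanF_eq_ofList]
  rw [List.map_append] at h
  exact nzdMod_of_isWeaklyRegular_append h

/-- The configuration ideal on the index set `S` in "codimension" `c`. -/
def cfgI (f : ι → A) (S : Finset ι) (c : ℕ) : Ideal A :=
  ⨅ (T : Finset ι) (_ : T ⊆ S ∧ T.card = c), spanF f T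

lemma mem_cfgI {f : ι → A} {S : Finset ι} {c : ℕ} {g : A} :
    g ∈ cfgI f S c ↔ ∀ T : Finset ι, T ⊆ S → T.card = c → g ∈ spanF f T := by
  simp only [cfgI, Submodule.mem_iInf]
  tauto

lemma cfgI_le_spanF {f : ι → A} {S T : Finset ι} {c : ℕ} (h1 : T ⊆ S) (h2 : T.card = c) :
    cfgI f S c ≤ spanF f T := fun _ hg => mem_cfgI.mp hg T h1 h2

lemma cfgI_mono_card {f : ι → A} {S : Finset ι} {c c' : ℕ} (h : c' ≤ c) :
    cfgI f S c' ≤ cfgI f S c := by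
  intro g hg
  rw [mem_cfgI] at hg ⊢
  intro T hTS hTc
  obtain ⟨U, hUT, hUc⟩ := Finset.exists_subset_card_eq (le_trans h hTc.ge)
  exact spanF_mono f hUT (hg U (hUT.trans hTS) hUc)

lemma cfgI_anti {f : ι → A} {S S' : Finset ι} {c : ℕ} (h : S' ⊆ S) :
    cfgI f S c ≤ cfgI f S' c := by
  intro g hg
  rw [mem_cfgI] at hg ⊢
  exact fun T hTS hTc => hg T (hTS.trans h) hTc

lemma cfgI_eq_top_of_card_lt {f : ι → A} {S : Finset ι} {c : ℕ} (h : S.card < c) :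
    cfgI f S c = ⊤ := by
  rw [eq_top_iff]
  intro g _
  rw [mem_cfgI]
  intro T hTS hTc
  exact absurd ((hTc ▸ Finset.card_le_card hTS)) (by omega)

lemma nzdMod_cfgI {f : ι → A} {S : Finset ι} {c : ℕ} {x : A}
    (h : ∀ T : Finset ι, T ⊆ S → T.card = c → NzdMod x (spanF f T)) :
    NzdMod x (cfgI f S c) := by
  intro a ha
  rw [mem_cfgI] at ha ⊢
  exact fun T h1 h2 => h T h1 h2 a (ha T h1 h2)

/-- The configuration ideal with all components augmented by the span of `f '' X`. -/
def cfgX (f : ι → A) (S : Finset ι) (c : ℕ) (X : Finset ι) : Ideal A :=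
  ⨅ (T : Finset ι) (_ : T ⊆ S ∧ T.card = c), (spanF f T ⊔ spanF f X)

lemma mem_cfgX {f : ι → A} {S : Finset ι} {c : ℕ} {X : Finset ι} {g : A} :
    g ∈ cfgX f S c X ↔ ∀ T : Finset ι, T ⊆ S → T.card = c → g ∈ spanF f T ⊔ spanF f X := by
  simp only [cfgX, Submodule.mem_iInf]
  tauto

lemma sup_le_cfgX {f : ι → A} {S : Finset ι} {c : ℕ} {X : Finset ι} :
    cfgI f S c ⊔ spanF f X ≤ cfgX f S c X := by
  intro g hg
  rw [mem_cfgX]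
  intro T h1 h2
  obtain ⟨u, hu, v, hv, rfl⟩ := Submodule.mem_sup.mp hg
  exact Submodule.add_mem _ (Submodule.mem_sup_left (cfgI_le_spanF h1 h2 hu))
    (Submodule.mem_sup_right hv)

lemma nzdMod_cfgX {f : ι → A} {S : Finset ι} {c : ℕ} {X : Finset ι} {x : A}
    (h : ∀ T : Finset ι, T ⊆ S → T.card = c → NzdMod x (spanF f T ⊔ spanF f X)) :
    NzdMod x (cfgX f S c X) := by
  intro a ha
  rw [mem_cfgX] at ha ⊢
  exact fun T h1 h2 => h T h1 h2 a (ha T h1 h2)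

end Config

section Multi

set_option linter.unusedSectionVars false
variable {A : Type*} [CommRing A] {ι : Type*} [DecidableEq ι]

lemma inf_sup_spanF_le (f : ι → A) (P Q : Ideal A) (X : Finset ι)
    (h : ∀ x ∈ X, ∀ X' ⊆ X.erase x, NzdMod (f x) (P ⊔ Q ⊔ spanF f X')) :
    (P ⊔ spanF f X) ⊓ (Q ⊔ spanF f X) ≤ (P ⊓ Q) ⊔ spanF f X := by
  induction X using Finset.induction_on with
  | empty =>
    rw [spanF_empty, sup_bot_eq, sup_bot_eq, sup_bot_eq]
  | @insert x X' hx ih =>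
    have hx' : (insert x X').erase x = X' := Finset.erase_insert hx
    have hkey : NzdMod (f x) ((P ⊔ spanF f X') ⊔ (Q ⊔ spanF f X')) := by
      have : (P ⊔ spanF f X') ⊔ (Q ⊔ spanF f X') = P ⊔ Q ⊔ spanF f X' := by
        rw [sup_sup_sup_comm, sup_idem]
      rw [this]
      exact h x (Finset.mem_insert_self _ _) X' (by rw [hx'])
    have ih' : (P ⊔ spanF f X') ⊓ (Q ⊔ spanF f X') ≤ (P ⊓ Q) ⊔ spanF f X' := by
      apply ih
      intro z hz X'' hX''
      refine h z (Finset.mem_insert_of_mem hz) X'' (hX''.trans ?_)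
      exact Finset.erase_subset_erase _ (Finset.subset_insert _ _)
    calc (P ⊔ spanF f (insert x X')) ⊓ (Q ⊔ spanF f (insert x X'))
        = ((P ⊔ spanF f X') ⊔ Ideal.span {f x}) ⊓ ((Q ⊔ spanF f X') ⊔ Ideal.span {f x}) := by
          rw [spanF_insert, sup_comm (Ideal.span {f x}) (spanF f X'), ← sup_assoc, ← sup_assoc]
      _ ≤ ((P ⊔ spanF f X') ⊓ (Q ⊔ spanF f X')) ⊔ Ideal.span {f x} :=
          inf_sup_span_singleton_le hkey
      _ ≤ ((P ⊓ Q) ⊔ spanF f X') ⊔ Ideal.span {f x} := sup_le_sup_right ih' _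
      _ = (P ⊓ Q) ⊔ spanF f (insert x X') := by
          rw [spanF_insert, sup_comm (Ideal.span {f x}) (spanF f X'), ← sup_assoc]

end Multi

section Main

set_option linter.unusedSectionVars false
variable {A : Type*} [CommRing A] {ι : Type*} [DecidableEq ι]

lemma nodup_toList_append_singleton {W : Finset ι} {x : ι} (hx : x ∉ W) :
    (W.toList ++ [x]).Nodup := by
  rw [List.nodup_append]
  refine ⟨Finset.nodup_toList W, List.nodup_singleton x, ?_⟩
  intro a ha b hb
  rw [List.mem_singleton] at hb
  subst hb
  exact fun h => hx (h ▸ Finset.mem_toList.mp ha)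

theorem cfgX_eq_sup (f : ι → A) : ∀ (S : Finset ι) (c : ℕ) (X : Finset ι),
    (∀ i ∈ X, i ∉ S) →
    (∀ l : List ι, l.Nodup → l.length ≤ c + X.card + 1 →
      RingTheory.Sequence.IsWeaklyRegular A (l.map f)) →
    cfgX f S c X = cfgI f S c ⊔ spanF f X := by
  intro S
  induction S using Finset.strongInduction with
  | _ S ih =>
  intro c X hdisj hm
  refine le_antisymm ?_ sup_le_cfgX
  rcases Nat.eq_zero_or_pos c with rfl | hc
  · have h0 : cfgX f S 0 X ≤ spanF f ∅ ⊔ spanF f X :=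
      fun g hg => mem_cfgX.mp hg ∅ (Finset.empty_subset S) Finset.card_empty
    refine h0.trans ?_
    rw [spanF_empty, bot_sup_eq]
    exact le_sup_right
  · by_cases hSc : S.card < c
    · rw [cfgI_eq_top_of_card_lt hSc, top_sup_eq]
      exact le_top
    · push_neg at hSc
      have hS : S.Nonempty := Finset.card_pos.mp (lt_of_lt_of_le hc hSc)
      obtain ⟨y, hy⟩ := hS
      set S' := S.erase y with hS'def
      have hS'sub : S' ⊆ S := Finset.erase_subset _ _
      have hS'ssub : S' ⊂ S := Finset.erase_ssubset hy
      have hyS' : y ∉ S' := Finset.notMem_erase _ _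
      have hyX : y ∉ X := fun h => hdisj y h hy
      have hdisj' : ∀ i ∈ X, i ∉ S' := fun i hi h => hdisj i hi (hS'sub h)
      have e2 : cfgX f S' c X = cfgI f S' c ⊔ spanF f X := ih S' hS'ssub c X hdisj' hm
      have e4 : cfgX f S' (c-1) (insert y X) = cfgI f S' (c-1) ⊔ spanF f (insert y X) := by
        apply ih S' hS'ssub
        · intro i hi
          rcases Finset.mem_insert.mp hi with rfl | hi
          · exact hyS'
          · exact hdisj' i hi
        · intro l hl hlen
          apply hm l hl
          rw [Finset.card_insert_of_notMem hyX] at hlen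
          omega
      have e5 : cfgX f S' (c-1) {y} = cfgI f S' (c-1) ⊔ spanF f {y} := by
        apply ih S' hS'ssub
        · intro i hi
          rw [Finset.mem_singleton] at hi
          subst hi
          exact hyS'
        · intro l hl hlen
          apply hm l hl
          rw [Finset.card_singleton] at hlen
          omega
      set J := cfgI f S' c with hJdef
      set K := cfgI f S' (c-1) with hKdef
      have hKJ : K ≤ J := cfgI_mono_card (Nat.sub_le c 1)
      have hsplit : cfgI f S c = J ⊓ (K ⊔ Ideal.span {f y}) := by
        rw [← spanF_singleton f y, ← e5]
        apply le_antisymm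
        · refine le_inf (cfgI_anti hS'sub) ?_
          intro g hg
          rw [mem_cfgX]
          intro U hUS' hUc
          have hyU : y ∉ U := fun h => hyS' (hUS' h)
          have hmem : g ∈ spanF f (insert y U) := mem_cfgI.mp hg (insert y U)
            (Finset.insert_subset hy (hUS'.trans hS'sub))
            (by rw [Finset.card_insert_of_notMem hyU, hUc]; omega)
          rw [spanF_insert] at hmem
          rw [spanF_singleton, sup_comm]
          exact hmem
        · rintro g ⟨hgJ, hgM⟩
          rw [mem_cfgI]
          intro T hTS hTc
          by_cases hyT : y ∈ T
          · have hUS' : T.erase y ⊆ S' := Finset.erase_subset_erase y hTS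
            have hUc : (T.erase y).card = c - 1 := by
              rw [Finset.card_erase_of_mem hyT, hTc]
            have hmem := mem_cfgX.mp hgM (T.erase y) hUS' hUc
            have hT : insert y (T.erase y) = T := Finset.insert_erase hyT
            rw [← hT, spanF_insert]
            rw [spanF_singleton] at hmem
            rw [sup_comm]
            exact hmem
          · exact mem_cfgI.mp hgJ T
              (fun i hi => Finset.mem_erase.mpr ⟨fun h => hyT (h ▸ hi), hTS hi⟩) hTc
      have h1 : cfgX f S c X ≤ J ⊔ spanF f X := by
        rw [← e2]
        intro g hg
        rw [mem_cfgX] at hg ⊢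
        exact fun T hTS' hTc => hg T (hTS'.trans hS'sub) hTc
      have h3 : cfgX f S c X ≤ (K ⊔ Ideal.span {f y}) ⊔ spanF f X := by
        have hstep : cfgX f S c X ≤ cfgX f S' (c-1) (insert y X) := by
          intro g hg
          rw [mem_cfgX] at hg ⊢
          intro U hUS' hUc
          have hyU : y ∉ U := fun h => hyS' (hUS' h)
          have hg' := hg (insert y U) (Finset.insert_subset hy (hUS'.trans hS'sub))
            (by rw [Finset.card_insert_of_notMem hyU, hUc]; omega)
          rw [spanF_insert] at hg'
          rw [spanF_insert]
          have hre : (Ideal.span {f y} ⊔ spanF f U) ⊔ spanF f X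
              = spanF f U ⊔ (Ideal.span {f y} ⊔ spanF f X) := by
            rw [sup_comm (Ideal.span {f y}) (spanF f U), sup_assoc]
          rwa [← hre]
        refine hstep.trans ?_
        rw [e4, spanF_insert, ← sup_assoc]
      rw [hsplit]
      refine (le_inf h1 h3).trans ?_
      apply inf_sup_spanF_le f J (K ⊔ Ideal.span {f y}) X
      intro x hxX X' hX'
      have hxS : x ∉ S := hdisj x hxX
      have hxy : x ≠ y := fun h => hxS (h ▸ hy)
      have hxX' : x ∉ X' := fun h => Finset.notMem_erase x X (hX' h)
      have hX'X : X' ⊆ X := hX'.trans (Finset.erase_subset _ _)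
      have hyX' : y ∉ X' := fun h => hyX (hX'X h)
      have hX'card : X'.card ≤ X.card - 1 := by
        have h1' := Finset.card_le_card hX'
        rwa [Finset.card_erase_of_mem hxX] at h1'
      have hXpos : 1 ≤ X.card := Finset.card_pos.mpr ⟨x, hxX⟩
      have e6 : cfgX f S' c (insert y X') = J ⊔ spanF f (insert y X') := by
        apply ih S' hS'ssub
        · intro i hi
          rcases Finset.mem_insert.mp hi with rfl | hi
          · exact hyS'
          · exact fun hiS' => hdisj i (hX'X hi) (hS'sub hiS')
        · intro l hl hlen
          apply hm l hl
          rw [Finset.card_insert_of_notMem hyX'] at hlen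
          omega
      have hexp : J ⊔ (K ⊔ Ideal.span {f y}) ⊔ spanF f X' = J ⊔ spanF f (insert y X') := by
        rw [spanF_insert, sup_assoc J (K ⊔ Ideal.span {f y}) _,
          sup_assoc K (Ideal.span {f y}) _, ← sup_assoc J K _, sup_eq_left.mpr hKJ]
      rw [hexp, ← e6]
      apply nzdMod_cfgX
      intro T hTS' hTc
      rw [← spanF_union]
      apply nzdMod_spanF f _ x
      · simp only [Finset.mem_union, Finset.mem_insert, not_or]
        exact ⟨fun h => hxS (hS'sub (hTS' h)), hxy, hxX'⟩
      · apply hm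
        · exact nodup_toList_append_singleton (by
            simp only [Finset.mem_union, Finset.mem_insert, not_or]
            exact ⟨fun h => hxS (hS'sub (hTS' h)), hxy, hxX'⟩)
        · rw [List.length_append, Finset.length_toList, List.length_singleton]
          have hc1 : (T ∪ insert y X').card ≤ T.card + (X'.card + 1) :=
            le_trans (Finset.card_union_le _ _) (by
              rw [Finset.card_insert_of_notMem hyX'])
          omega

end Main

section BDL

set_option linter.unusedSectionVars false
variable {A : Type*} [CommRing A] {ι : Type*} [DecidableEq ι]

theorem cfgI_insert_eq (f : ι → A) (S : Finset ι) (x : ι) (hxS : x ∉ S) (c : ℕ) (hc : 1 ≤ c)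
    (hm : ∀ l : List ι, l.Nodup → l.length ≤ c + 1 →
      RingTheory.Sequence.IsWeaklyRegular A (l.map f)) :
    cfgI f (insert x S) c = Ideal.span {f x} * cfgI f S c ⊔ cfgI f S (c-1) := by
  apply le_antisymm
  · -- hard direction
    intro g hg
    have stepA : g ∈ cfgI f S (c-1) ⊔ spanF f {x} := by
      rw [← cfgX_eq_sup f S (c-1) {x}
        (by intro i hi; rw [Finset.mem_singleton] at hi; subst hi; exact hxS)
        (by intro l hl hlen; apply hm l hl; rw [Finset.card_singleton] at hlen; omega)]
      rw [mem_cfgX]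
      intro U hUS hUc
      have hxU : x ∉ U := fun h => hxS (hUS h)
      have hmem : g ∈ spanF f (insert x U) := mem_cfgI.mp hg (insert x U)
        (Finset.insert_subset_insert x hUS)
        (by rw [Finset.card_insert_of_notMem hxU, hUc]; omega)
      rw [spanF_insert] at hmem
      rw [spanF_singleton, sup_comm]
      exact hmem
    rw [spanF_singleton] at stepA
    obtain ⟨a, ha, u, hu, rfl⟩ := Submodule.mem_sup.mp stepA
    obtain ⟨h, rfl⟩ := Ideal.mem_span_singleton'.mp hu
    have stepB : h ∈ cfgI f S c := by
      rw [mem_cfgI]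
      intro T hTS hTc
      have hxT : x ∉ T := fun hmem => hxS (hTS hmem)
      have hg' : f x * h ∈ spanF f T := by
        have hgT : a + h * f x ∈ spanF f T := mem_cfgI.mp hg T
          (hTS.trans (Finset.subset_insert x S)) hTc
        have haT : a ∈ spanF f T := cfgI_le_spanF hTS hTc (cfgI_mono_card (Nat.sub_le c 1) ha)
        have : f x * h = (a + h * f x) - a := by ring
        rw [this]
        exact Submodule.sub_mem _ hgT haT
      exact nzdMod_spanF f T x hxT
        (hm _ (nodup_toList_append_singleton hxT)
          (by rw [List.length_append, Finset.length_toList, List.length_singleton, hTc])) h hg'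
    refine Submodule.mem_sup.mpr ⟨h * f x, ?_, a, ha, by ring⟩
    rw [mul_comm h (f x)]
    exact Ideal.mul_mem_mul (Ideal.mem_span_singleton_self (f x)) stepB
  · apply sup_le
    · -- span {f x} * cfgI f S c ≤ cfgI f (insert x S) c
      intro g hg
      rw [mem_cfgI]
      intro T hTS hTc
      by_cases hxT : x ∈ T
      · have : Ideal.span {f x} * cfgI f S c ≤ Ideal.span {f x} := Ideal.mul_le_left
        refine this.trans ?_ hg
        rw [← spanF_singleton]
        exact spanF_mono f (Finset.singleton_subset_iff.mpr hxT)
      · have hTS' : T ⊆ S := fun i hi => by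
          rcases Finset.mem_insert.mp (hTS hi) with rfl | h
          · exact absurd hi hxT
          · exact h
        exact (Ideal.mul_le_right.trans (cfgI_le_spanF hTS' hTc)) hg
    · -- cfgI f S (c-1) ≤ cfgI f (insert x S) c
      intro g hg
      rw [mem_cfgI]
      intro T hTS hTc
      by_cases hxT : x ∈ T
      · have hUS : T.erase x ⊆ S := by
          intro i hi
          obtain ⟨hix, hiT⟩ := Finset.mem_erase.mp hi
          rcases Finset.mem_insert.mp (hTS hiT) with rfl | h
          · exact absurd rfl hix
          · exact h
        have hUc : (T.erase x).card = c - 1 := by rw [Finset.card_erase_of_mem hxT, hTc]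
        exact spanF_mono f (Finset.erase_subset _ _) (mem_cfgI.mp hg (T.erase x) hUS hUc)
      · have hTS' : T ⊆ S := fun i hi => by
          rcases Finset.mem_insert.mp (hTS hi) with rfl | h
          · exact absurd hi hxT
          · exact h
        exact cfgI_le_spanF hTS' hTc (cfgI_mono_card (Nat.sub_le c 1) hg)

end BDL

section Graded

open MvPolynomial

set_option linter.unusedSectionVars false
variable {k : Type} [Field k] {σ : Type} [Finite σ]

lemma homog_fd (m : ℕ) : FiniteDimensional k (homogeneousSubmodule σ k m) := by
  have h : homogeneousSubmodule σ k m ≤ restrictTotalDegree σ k m := fun p hp => by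
    rw [mem_restrictTotalDegree]
    exact ((mem_homogeneousSubmodule m p).mp hp).totalDegree_le
  exact Submodule.finiteDimensional_of_le h

lemma fd_of_le_homog {m : ℕ} {W : Submodule k (MvPolynomial σ k)}
    (h : W ≤ homogeneousSubmodule σ k m) : FiniteDimensional k W :=
  have := homog_fd (k := k) (σ := σ) m
  Submodule.finiteDimensional_of_le h

/-- Multiplying a polynomial by a homogeneous polynomial of degree `j` and taking the
degree-`m` homogeneous component. -/
lemma homogeneousComponent_mul_isHomogeneous {h g : MvPolynomial σ k} {j m : ℕ}
    (hh : h.IsHomogeneous j) :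
    homogeneousComponent m (h * g)
      = if j ≤ m then h * homogeneousComponent (m - j) g else 0 := by
  conv_lhs => rw [← sum_homogeneousComponent g, Finset.mul_sum, map_sum]
  have hterm : ∀ i, homogeneousComponent m (h * homogeneousComponent i g)
      = if m = j + i then h * homogeneousComponent i g else 0 := fun i =>
    homogeneousComponent_of_mem (hh.mul (homogeneousComponent_isHomogeneous i g))
  rw [Finset.sum_congr rfl (fun i _ => hterm i)]
  by_cases hjm : j ≤ m
  · rw [if_pos hjm]
    by_cases hNg : m - j < g.totalDegree + 1
    · rw [Finset.sum_eq_single_of_mem (m - j) (Finset.mem_range.mpr hNg)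
        (fun i _ hne => if_neg (by omega)), if_pos (by omega)]
    · rw [homogeneousComponent_eq_zero _ g (by omega), mul_zero]
      apply Finset.sum_eq_zero
      intro i hi
      rw [Finset.mem_range] at hi
      rw [if_neg (by omega)]
  · rw [if_neg hjm]
    apply Finset.sum_eq_zero
    intro i hi
    rw [if_neg (by omega)]

/-- An ideal closed under taking homogeneous components. -/
def HomogI (P : Ideal (MvPolynomial σ k)) : Prop :=
  ∀ g ∈ P, ∀ m : ℕ, homogeneousComponent m g ∈ P

lemma homogI_span {s : Set (MvPolynomial σ k)} (hs : ∀ p ∈ s, ∃ m, p.IsHomogeneous m) :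
    HomogI (Ideal.span s) := by
  intro g hg
  induction hg using Submodule.span_induction with
  | mem p hp =>
    intro m
    obtain ⟨e, he⟩ := hs p hp
    rw [homogeneousComponent_of_mem ((mem_homogeneousSubmodule e p).mpr he)]
    split
    · exact Ideal.subset_span hp
    · exact Submodule.zero_mem _
  | zero => intro m; rw [map_zero]; exact Submodule.zero_mem _
  | add p q _ _ hp hq => intro m; rw [map_add]; exact Submodule.add_mem _ (hp m) (hq m)
  | smul r p _ hp =>
    intro m
    have hr : r • p = ∑ j ∈ Finset.range (r.totalDegree + 1), homogeneousComponent j r * p := by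
      rw [← Finset.sum_mul, sum_homogeneousComponent]
      rfl
    rw [hr, map_sum]
    apply Submodule.sum_mem
    intro j _
    rw [homogeneousComponent_mul_isHomogeneous (homogeneousComponent_isHomogeneous j r)]
    split
    · exact Ideal.mul_mem_left _ _ (hp (m - j))
    · exact Submodule.zero_mem _

end Graded

section Graded2

open MvPolynomial

set_option linter.unusedSectionVars false
variable {k : Type} [Field k] {σ : Type} [Finite σ]

/-- The degree-`t` graded piece of an ideal, as a `k`-subspace. -/
noncomputable def Vt (P : Ideal (MvPolynomial σ k)) (t : ℕ) : Submodule k (MvPolynomial σ k) :=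
  (Submodule.restrictScalars k
    (P : Submodule (MvPolynomial σ k) (MvPolynomial σ k))) ⊓ homogeneousSubmodule σ k t

lemma mem_Vt {P : Ideal (MvPolynomial σ k)} {t : ℕ} {g : MvPolynomial σ k} :
    g ∈ Vt P t ↔ g ∈ P ∧ g.IsHomogeneous t := by
  rw [Vt, Submodule.mem_inf, Submodule.restrictScalars_mem, mem_homogeneousSubmodule]

lemma Vt_le_homog {P : Ideal (MvPolynomial σ k)} {t : ℕ} :
    Vt P t ≤ homogeneousSubmodule σ k t := inf_le_right

lemma Vt_mono {P Q : Ideal (MvPolynomial σ k)} (h : P ≤ Q) (t : ℕ) : Vt P t ≤ Vt Q t :=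
  inf_le_inf_right _ (fun g hg => h hg)

variable {q : MvPolynomial σ k} {e : ℕ}

/-- Multiplication by `q` as a `k`-linear map. -/
noncomputable def mulQ (q : MvPolynomial σ k) : MvPolynomial σ k →ₗ[k] MvPolynomial σ k :=
  LinearMap.mulLeft k q

lemma mulQ_apply (g : MvPolynomial σ k) : mulQ q g = q * g := rfl

lemma map_mulQ_Vt_le_Vt {P : Ideal (MvPolynomial σ k)} {u : ℕ} (hq : q.IsHomogeneous e) :
    Submodule.map (mulQ q) (Vt P u) ≤ Vt (Ideal.span {q} * P) (e + u) := by
  rintro _ ⟨g, hg, rfl⟩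
  rw [SetLike.mem_coe, mem_Vt] at hg
  rw [mem_Vt]
  exact ⟨Ideal.mul_mem_mul (Ideal.mem_span_singleton_self q) hg.1, hq.mul hg.2⟩

/-- Decomposition of the graded piece of `(q)·B + A` when `e ≤ t`. -/
lemma Vt_decomp {A B : Ideal (MvPolynomial σ k)} (hA : HomogI A) (hB : HomogI B)
    (hq : q.IsHomogeneous e) {t : ℕ} (het : e ≤ t) :
    Vt (Ideal.span {q} * B ⊔ A) t
      = Submodule.map (mulQ q) (Vt B (t - e)) ⊔ Vt A t := by
  apply le_antisymm
  · intro g hg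
    rw [mem_Vt] at hg
    obtain ⟨hgI, hgt⟩ := hg
    obtain ⟨u, hu, a, ha, rfl⟩ := Submodule.mem_sup.mp hgI
    obtain ⟨h, hh, rfl⟩ := Ideal.mem_span_singleton_mul.mp hu
    have hcomp : homogeneousComponent t (q * h + a) = q * h + a :=
      by rw [homogeneousComponent_of_mem ((mem_homogeneousSubmodule t _).mpr hgt), if_pos rfl]
    rw [map_add, homogeneousComponent_mul_isHomogeneous hq, if_pos het] at hcomp
    rw [← hcomp]
    apply Submodule.add_mem
    · apply Submodule.mem_sup_left
      exact ⟨homogeneousComponent (t - e) h,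
        mem_Vt.mpr ⟨hB h hh _, homogeneousComponent_isHomogeneous _ _⟩, rfl⟩
    · exact Submodule.mem_sup_right (mem_Vt.mpr
        ⟨hA a ha t, homogeneousComponent_isHomogeneous _ _⟩)
  · apply sup_le
    · have := map_mulQ_Vt_le_Vt (P := B) (u := t - e) hq
      rw [Nat.add_sub_cancel' het] at this
      exact this.trans (Vt_mono le_sup_left t)
    · exact Vt_mono le_sup_right t

/-- In low degrees the graded piece of `(q)·B + A` is just that of `A`. -/
lemma Vt_decomp_low {A B : Ideal (MvPolynomial σ k)} (hA : HomogI A)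
    (hq : q.IsHomogeneous e) {t : ℕ} (het : t < e) (hAI : A ≤ Ideal.span {q} * B ⊔ A) :
    Vt (Ideal.span {q} * B ⊔ A) t = Vt A t := by
  apply le_antisymm
  · intro g hg
    rw [mem_Vt] at hg
    obtain ⟨hgI, hgt⟩ := hg
    obtain ⟨u, hu, a, ha, rfl⟩ := Submodule.mem_sup.mp hgI
    obtain ⟨h, hh, rfl⟩ := Ideal.mem_span_singleton_mul.mp hu
    have hcomp : homogeneousComponent t (q * h + a) = q * h + a :=
      by rw [homogeneousComponent_of_mem ((mem_homogeneousSubmodule t _).mpr hgt), if_pos rfl]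
    rw [map_add, homogeneousComponent_mul_isHomogeneous hq, if_neg (by omega), zero_add]
      at hcomp
    rw [← hcomp]
    exact mem_Vt.mpr ⟨hA a ha t, homogeneousComponent_isHomogeneous _ _⟩
  · exact Vt_mono hAI t

/-- Intersection computation: `q·B_u ∩ A_{e+u} = q·A_u` when `q` is a nonzerodivisor mod `A`. -/
lemma Vt_inter {A B : Ideal (MvPolynomial σ k)} (hAB : A ≤ B) (hnzd : NzdMod q A)
    (hq : q.IsHomogeneous e) (u : ℕ) :
    Submodule.map (mulQ q) (Vt B u) ⊓ Vt A (e + u) = Submodule.map (mulQ q) (Vt A u) := by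
  apply le_antisymm
  · rintro g ⟨⟨h, hh, rfl⟩, hga⟩
    rw [SetLike.mem_coe, mem_Vt] at hh
    rw [SetLike.mem_coe, mem_Vt] at hga
    exact ⟨h, mem_Vt.mpr ⟨hnzd h hga.1, hh.2⟩, rfl⟩
  · apply le_inf
    · exact Submodule.map_mono (Vt_mono hAB u)
    · rintro _ ⟨a, ha, rfl⟩
      rw [SetLike.mem_coe, mem_Vt] at ha
      rw [mem_Vt]
      exact ⟨Ideal.mul_mem_left _ _ ha.1, hq.mul ha.2⟩

lemma finrank_map_mulQ (hq : IsSMulRegular (MvPolynomial σ k) q)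
    (W : Submodule k (MvPolynomial σ k)) :
    Module.finrank k (Submodule.map (mulQ q) W) = Module.finrank k W := by
  have hinj : Function.Injective (mulQ (k := k) (σ := σ) q) := by
    intro a b hab
    exact hq hab
  exact (LinearEquiv.finrank_eq (Submodule.equivMapOfInjective _ hinj W)).symm

end Graded2

section Bridge

open MvPolynomial

set_option linter.unusedSectionVars false
set_option maxHeartbeats 1000000

variable {A' : Type*} [CommRing A']

lemma mem_configIdeal {m c : ℕ} {f : Fin m → A'} {g : A'} :
    g ∈ configIdeal c f ↔ ∀ T : Finset (Fin m), T.card = c → g ∈ Ideal.span (f '' ↑T) := by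
  simp only [configIdeal, Submodule.mem_iInf, Set.mem_setOf_eq]

lemma configIdeal_eq_cfgI {m c : ℕ} (f : Fin m → A') :
    configIdeal c f = cfgI f Finset.univ c := by
  ext g
  rw [mem_configIdeal, mem_cfgI]
  exact ⟨fun h T _ hc => h T hc, fun h T hc => h T (Finset.subset_univ T) hc⟩

lemma configIdeal_comp_castSucc {s : ℕ} (f : Fin (s + 1) → A') (c : ℕ) :
    configIdeal c (f ∘ Fin.castSucc) = cfgI f (Finset.univ.image Fin.castSucc) c := by
  ext g
  rw [mem_configIdeal, mem_cfgI]
  constructor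
  · intro h T' hT'sub hT'card
    obtain ⟨T, _, hT⟩ := Finset.subset_image_iff.mp hT'sub
    have hTcard : T.card = c := by
      rw [← hT'card, ← hT, Finset.card_image_of_injective T (Fin.castSucc_injective s)]
    have := h T hTcard
    rwa [Set.image_comp, ← Finset.coe_image, hT] at this
  · intro h T hTcard
    have hsub : T.image Fin.castSucc ⊆ Finset.univ.image Fin.castSucc :=
      Finset.image_subset_image (Finset.subset_univ T)
    have hcard : (T.image Fin.castSucc).card = c := by
      rw [Finset.card_image_of_injective T (Fin.castSucc_injective s), hTcard]
    have := h (T.image Fin.castSucc) hsub hcard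
    rwa [Set.image_comp, ← Finset.coe_image]

lemma univ_eq_insert_last (s : ℕ) :
    (Finset.univ : Finset (Fin (s + 1)))
      = insert (Fin.last s) (Finset.univ.image Fin.castSucc) := by
  ext i
  simp only [Finset.mem_univ, true_iff, Finset.mem_insert, Finset.mem_image]
  rcases Fin.eq_castSucc_or_eq_last i with ⟨j, rfl⟩ | rfl
  · exact Or.inr ⟨j, by simp⟩
  · exact Or.inl rfl

lemma last_not_mem_image (s : ℕ) :
    Fin.last s ∉ Finset.univ.image (Fin.castSucc (n := s)) := by
  rw [Finset.mem_image]
  rintro ⟨j, -, hj⟩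
  exact (Fin.castSucc_lt_last j).ne hj

end Bridge

section Bridge2

open MvPolynomial

set_option linter.unusedSectionVars false
variable {k : Type} [Field k] {σ : Type} [Finite σ] {ι : Type*} [DecidableEq ι]

lemma homogI_cfgI {f : ι → MvPolynomial σ k} {d : ι → ℕ}
    (hdeg : ∀ i, (f i).IsHomogeneous (d i)) (S : Finset ι) (c : ℕ) :
    HomogI (cfgI f S c) := by
  intro g hg m
  rw [mem_cfgI] at hg ⊢
  intro T h1 h2
  have hsp : HomogI (Ideal.span (f '' ↑T)) := by
    apply homogI_span
    rintro p ⟨i, _, rfl⟩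
    exact ⟨d i, hdeg i⟩
  exact hsp g (hg T h1 h2) m

lemma hilbertFn_of_neg {I : Ideal (MvPolynomial σ k)} {t : ℤ} (ht : t < 0) :
    hilbertFn k I t = 0 := by
  rw [hilbertFn, if_pos ht]

lemma hilbertFn_of_nonneg {I : Ideal (MvPolynomial σ k)} {t : ℤ} (ht : 0 ≤ t) :
    hilbertFn k I t
      = (Module.finrank k (homogeneousSubmodule σ k t.toNat) : ℤ)
        - (Module.finrank k (Vt I t.toNat) : ℤ) := by
  rw [hilbertFn, if_neg (not_lt.mpr ht)]
  rfl

end Bridge2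

theorem statement5 (k : Type) [Field k] [Infinite k] (n s c : ℕ)
    (hc1 : 1 ≤ c) (hcn : c ≤ n) (hcs : c ≤ s)
    (f : Fin (s + 1) → MvPolynomial (Fin (n + 1)) k) (d : Fin (s + 1) → ℕ)
    (hdeg : ∀ i, (f i).IsHomogeneous (d i))
    (hreg : SubsetsRegular f (c + 1)) :
    ∀ t : ℤ,
      hilbertFn k (configIdeal c f) t
        = (hilbertFn k (configIdeal (c - 1) (f ∘ Fin.castSucc)) t
            - hilbertFn k (configIdeal (c - 1) (f ∘ Fin.castSucc)) (t - d (Fin.last s)))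
          + hilbertFn k (configIdeal c (f ∘ Fin.castSucc)) (t - d (Fin.last s)) := by
  classical
  set q : MvPolynomial (Fin (n + 1)) k := f (Fin.last s) with hqdef
  set e : ℕ := d (Fin.last s) with hedef
  set S₀ : Finset (Fin (s + 1)) := Finset.univ.image Fin.castSucc with hS0def
  have hlast : Fin.last s ∉ S₀ := last_not_mem_image s
  set Aid : Ideal (MvPolynomial (Fin (n + 1)) k) := cfgI f S₀ (c - 1) with hAdef
  set Bid : Ideal (MvPolynomial (Fin (n + 1)) k) := cfgI f S₀ c with hBdef
  have hm : ∀ l : List (Fin (s + 1)), l.Nodup → l.length ≤ c + 1 →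
      RingTheory.Sequence.IsWeaklyRegular (MvPolynomial (Fin (n + 1)) k) (l.map f) :=
    fun l hl hlen => (hreg l hl hlen).toIsWeaklyRegular
  have hAB : Aid ≤ Bid := cfgI_mono_card (Nat.sub_le c 1)
  have hq : q.IsHomogeneous e := hdeg (Fin.last s)
  have hqreg : IsSMulRegular (MvPolynomial (Fin (n + 1)) k) q := by
    have h1 := hm [Fin.last s] (List.nodup_singleton _)
      (by simp only [List.length_singleton]; omega)
    rw [List.map_singleton] at h1
    exact (RingTheory.Sequence.isWeaklyRegular_singleton_iff _ q).mp h1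
  have hnzd : NzdMod q Aid := by
    apply nzdMod_cfgI
    intro T hTS hTc
    have hlT : Fin.last s ∉ T := fun h => hlast (hTS h)
    apply nzdMod_spanF f T (Fin.last s) hlT
    apply hm _ (nodup_toList_append_singleton hlT)
    rw [List.length_append, Finset.length_toList, List.length_singleton, hTc]
    omega
  have hA : HomogI Aid := homogI_cfgI hdeg S₀ (c - 1)
  have hB : HomogI Bid := homogI_cfgI hdeg S₀ c
  have hidentity : configIdeal c f = Ideal.span {q} * Bid ⊔ Aid := by
    rw [configIdeal_eq_cfgI, univ_eq_insert_last s]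
    exact cfgI_insert_eq f S₀ (Fin.last s) hlast c hc1 hm
  have hA' : configIdeal (c - 1) (f ∘ Fin.castSucc) = Aid := configIdeal_comp_castSucc f (c - 1)
  have hB' : configIdeal c (f ∘ Fin.castSucc) = Bid := configIdeal_comp_castSucc f c
  have key : ∀ t : ℕ, e ≤ t →
      Module.finrank k (Vt (Ideal.span {q} * Bid ⊔ Aid) t)
        + Module.finrank k (Vt Aid (t - e))
      = Module.finrank k (Vt Bid (t - e)) + Module.finrank k (Vt Aid t) := by
    intro t het
    have hdec := Vt_decomp hA hB hq het
    have hint := Vt_inter hAB hnzd hq (t - e)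
    rw [Nat.add_sub_cancel' het] at hint
    have hle1 : Submodule.map (mulQ q) (Vt Bid (t - e)) ≤ homogeneousSubmodule (Fin (n+1)) k t := by
      have h1 := map_mulQ_Vt_le_Vt (P := Bid) (u := t - e) hq
      rw [Nat.add_sub_cancel' het] at h1
      exact h1.trans Vt_le_homog
    have fd1 : FiniteDimensional k (Submodule.map (mulQ q) (Vt Bid (t - e))) :=
      fd_of_le_homog hle1
    have fd2 : FiniteDimensional k (Vt Aid t) := fd_of_le_homog Vt_le_homog
    have hsum := Submodule.finrank_sup_add_finrank_inf_eq
      (Submodule.map (mulQ q) (Vt Bid (t - e))) (Vt Aid t)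
    rw [hint, ← hdec, finrank_map_mulQ hqreg, finrank_map_mulQ hqreg] at hsum
    exact hsum
  intro t
  rw [hidentity, hA', hB']
  by_cases ht0 : t < 0
  · rw [hilbertFn_of_neg ht0, hilbertFn_of_neg ht0,
      hilbertFn_of_neg (by omega : t - (e : ℤ) < 0), hilbertFn_of_neg (by omega : t - (e : ℤ) < 0)]
    ring
  · push_neg at ht0
    by_cases hte : t < (e : ℤ)
    · rw [hilbertFn_of_neg (by omega : t - (e : ℤ) < 0),
        hilbertFn_of_neg (by omega : t - (e : ℤ) < 0),
        hilbertFn_of_nonneg ht0, hilbertFn_of_nonneg ht0]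
      have hlow : Vt (Ideal.span {q} * Bid ⊔ Aid) t.toNat = Vt Aid t.toNat :=
        Vt_decomp_low hA hq (by omega) le_sup_right
      rw [hlow]
      ring
    · push_neg at hte
      have hte' : (0 : ℤ) ≤ t - e := by omega
      rw [hilbertFn_of_nonneg ht0, hilbertFn_of_nonneg ht0,
        hilbertFn_of_nonneg hte', hilbertFn_of_nonneg hte']
      have htn : (t - (e : ℤ)).toNat = t.toNat - e := by omega
      rw [htn]
      have hkey := key t.toNat (by omega)
      push_cast at hkey ⊢
      linarith [hkey]
end

section
/- Let f_1,…,f_s ∈ R be homogeneous polynomials of degrees d_1,…,d_s such that every subset of at most c+1 of them is an R-regular sequence, where 1 ≤ c ≤ min(n,s). Then ⋂_{1≤i_1<⋯<i_c≤s} (f_{i_1},…,f_{i_c}) = ( { f_{i_1} f_{i_2} ⋯ f_{i_{s−c+1}} : 1 ≤ i_1 < i_2 < ⋯ < i_{s−c+1} ≤ s } ); that is, the configuration ideal is generated by all products of s−c+1 of the forms f_1,…,f_s. -/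
/- ------------------------------------------------------------------
   Common definitions
------------------------------------------------------------------ -/

open MvPolynomial CategoryTheory

lemma nzd_of_regular {A : Type*} [CommRing A] {l : List A} {x : A}
    (h : RingTheory.Sequence.IsRegular A (l ++ [x])) :
    ∀ a : A, x * a ∈ Ideal.span {r | r ∈ l} → a ∈ Ideal.span {r | r ∈ l} := by
  intro a ha
  have hw := h.toIsWeaklyRegular
  rw [RingTheory.Sequence.isWeaklyRegular_append_iff] at hw
  have h2 := hw.2
  rw [RingTheory.Sequence.isWeaklyRegular_singleton_iff] at h2
  have hJ : (Ideal.ofList l • ⊤ : Submodule A A) = (Ideal.span {r | r ∈ l} : Ideal A) := by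
    rw [smul_eq_mul, Ideal.mul_top]
  have hmk : Submodule.Quotient.mk (p := (Ideal.ofList l • ⊤ : Submodule A A)) a = 0 := by
    apply h2
    show x • (Submodule.Quotient.mk a) = x • (0 : A ⧸ (Ideal.ofList l • ⊤ : Submodule A A))
    rw [smul_zero, ← Submodule.Quotient.mk_smul, Submodule.Quotient.mk_eq_zero, hJ]
    simpa [smul_eq_mul] using ha
  rw [Submodule.Quotient.mk_eq_zero, hJ] at hmk
  exact hmk

lemma set_of_list_map {A : Type*} {ι : Type*} (f : ι → A) (S : Finset ι) :
    {r | r ∈ S.toList.map f} = f '' ↑S := by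
  ext r; simp

lemma nzd_single {A : Type*} [CommRing A] {s c : ℕ} {f : Fin s → A}
    (hreg : SubsetsRegular f (c + 1)) {S : Finset (Fin s)} (hS : S.card = c)
    {i : Fin s} (hi : i ∉ S) :
    ∀ a : A, f i * a ∈ Ideal.span (f '' ↑S) → a ∈ Ideal.span (f '' ↑S) := by
  have hnd : (S.toList ++ [i]).Nodup := by
    simp [List.nodup_append, S.nodup_toList, hi]
  have hlen : (S.toList ++ [i]).length ≤ c + 1 := by
    simp [Finset.length_toList, hS]
  have h := hreg _ hnd hlen
  rw [List.map_append] at h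
  have := nzd_of_regular h
  rwa [set_of_list_map] at this

lemma prod_nzd {A : Type*} [CommRing A] {ι : Type*} [DecidableEq ι] (J : Ideal A)
    (T : Finset ι) (g : ι → A)
    (h : ∀ i ∈ T, ∀ a : A, g i * a ∈ J → a ∈ J) :
    ∀ a : A, (∏ i ∈ T, g i) * a ∈ J → a ∈ J := by
  induction T using Finset.induction_on with
  | empty => intro a ha; simpa using ha
  | @insert x T' hx ih =>
    intro a ha
    rw [Finset.prod_insert hx, mul_assoc] at ha
    exact ih (fun i hi => h i (Finset.mem_insert_of_mem hi)) a
      (h x (Finset.mem_insert_self x T') _ ha)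

lemma mul_mem_of_mem_span {A : Type*} [CommRing A] {X : Set A} {K : Ideal A} {g b : A}
    (hb : b ∈ Ideal.span X) (h : ∀ x ∈ X, x * g ∈ K) : b * g ∈ K := by
  induction hb using Submodule.span_induction with
  | mem x hx => exact h x hx
  | zero => simp
  | add y z _ _ hy hz => rw [add_mul]; exact K.add_mem hy hz
  | smul a y _ hy => rw [smul_eq_mul, mul_assoc]; exact Ideal.mul_mem_left _ _ hy

lemma mem_config {A : Type*} [CommRing A] {s c : ℕ} {f : Fin s → A} {x : A} :
    x ∈ configIdeal c f ↔ ∀ T : Finset (Fin s), T.card = c → x ∈ Ideal.span (f '' ↑T) := by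
  simp [configIdeal, Ideal.mem_iInf, Set.mem_setOf_eq]

lemma easy_dir {A : Type*} [CommRing A] {s c : ℕ} (hcs : c ≤ s) (f : Fin s → A) :
    Ideal.span ((fun T : Finset (Fin s) => ∏ i ∈ T, f i) '' {T | T.card = s - c + 1})
      ≤ configIdeal c f := by
  rw [Ideal.span_le]
  rintro g ⟨U, hU, rfl⟩
  simp only [Set.mem_setOf_eq] at hU
  rw [SetLike.mem_coe, mem_config]
  dsimp only
  intro S hS
  have hne : (U ∩ S).Nonempty := by
    rw [← Finset.card_pos]
    have h1 : (U ∪ S).card + (U ∩ S).card = U.card + S.card :=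
      Finset.card_union_add_card_inter U S
    have h2 : (U ∪ S).card ≤ s := by
      simpa using Finset.card_le_card (Finset.subset_univ (U ∪ S))
    omega
  obtain ⟨i, hi⟩ := hne
  rw [Finset.mem_inter] at hi
  rw [← Finset.mul_prod_erase U f hi.1]
  exact Ideal.mul_mem_right _ _ (Ideal.subset_span ⟨i, hi.2, rfl⟩)

lemma config_aux {A : Type*} [CommRing A] (c : ℕ) (hc1 : 1 ≤ c) :
    ∀ s : ℕ, c ≤ s → ∀ f : Fin s → A, SubsetsRegular f (c + 1) →
      configIdeal c f
        = Ideal.span ((fun T : Finset (Fin s) => ∏ i ∈ T, f i) ''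
            {T : Finset (Fin s) | T.card = s - c + 1}) := by
  intro s hcs
  induction s, hcs using Nat.le_induction with
  | base =>
    intro f hreg
    apply le_antisymm _ (easy_dir le_rfl f)
    intro x hx
    rw [mem_config] at hx
    have hx' := hx Finset.univ (by simp)
    refine Ideal.span_le.mpr ?_ hx'
    rintro y ⟨i, _, rfl⟩
    apply Ideal.subset_span
    exact ⟨{i}, by simp, by simp⟩
  | succ s hcs ih =>
    intro f hreg
    apply le_antisymm _ (easy_dir (by omega) f)
    intro h hmem
    rw [mem_config] at hmem
    set f' : Fin s → A := f ∘ Fin.castSucc with hf'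
    have hreg' : SubsetsRegular f' (c + 1) := by
      intro l hnd hlen
      have := hreg (l.map Fin.castSucc) (hnd.map (Fin.castSucc_injective s))
        (by simpa using hlen)
      rwa [List.map_map] at this
    have hcast : h ∈ Ideal.span ((fun T : Finset (Fin s) => ∏ i ∈ T, f' i) ''
        {T : Finset (Fin s) | T.card = s - c + 1}) := by
      rw [← ih f' hreg', mem_config]
      intro T hT
      have := hmem (T.map Fin.castSuccEmb) (by simpa using hT)
      rwa [Finset.coe_map, Fin.coe_castSuccEmb, ← Set.image_comp] at this
    obtain ⟨co, hsupp, hsum⟩ := Submodule.mem_span_set.mp hcast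
    rw [← hsum, Finsupp.sum]
    apply Submodule.sum_mem
    intro g₀ hg₀
    obtain ⟨T₀, hT₀card, hg₀eq⟩ := hsupp hg₀
    simp only [Set.mem_setOf_eq] at hT₀card
    classical
    set S : Finset (Fin (s + 1)) := (T₀ᶜ).map Fin.castSuccEmb ∪ {Fin.last s} with hSdef
    have hlast_not : Fin.last s ∉ (T₀ᶜ).map Fin.castSuccEmb := by
      simp only [Finset.mem_map, Fin.coe_castSuccEmb]
      rintro ⟨x, -, hx⟩
      exact absurd hx (ne_of_lt (Fin.castSucc_lt_last x))
    have hScard : S.card = c := by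
      rw [hSdef, Finset.card_union_of_disjoint (Finset.disjoint_singleton_right.mpr hlast_not),
        Finset.card_map, Finset.card_compl, Finset.card_singleton, Fintype.card_fin]
      omega
    have hmemS : ∀ (i : Fin s), i ∈ T₀ → Fin.castSucc i ∉ S := by
      intro i hi
      rw [hSdef]
      simp only [Finset.mem_union, Finset.mem_map, Fin.coe_castSuccEmb, Finset.mem_singleton,
        Finset.mem_compl, not_or]
      constructor
      · rintro ⟨x, hx, hxe⟩
        exact hx (by rw [Fin.castSucc_injective s hxe]; exact hi)
      · exact ne_of_lt (Fin.castSucc_lt_last i)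
    have hhS : h ∈ Ideal.span (f '' ↑S) := hmem S hScard
    have hcg : co g₀ * g₀ ∈ Ideal.span (f '' ↑S) := by
      have heq : co g₀ • g₀ = (co.sum fun mi r => r • mi)
          - ∑ g ∈ co.support.erase g₀, co g • g := by
        rw [Finsupp.sum, ← Finset.add_sum_erase _ _ hg₀]; ring
      rw [← smul_eq_mul, heq, hsum]
      apply Submodule.sub_mem _ hhS
      apply Submodule.sum_mem
      intro g hg
      obtain ⟨hgne, hgsupp⟩ := Finset.mem_erase.mp hg
      obtain ⟨T, hTcard, hgeq⟩ := hsupp hgsupp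
      simp only [Set.mem_setOf_eq] at hTcard
      have hTne : T ≠ T₀ := fun e => hgne (by rw [← hgeq, ← hg₀eq, e])
      have hex : ∃ j ∈ T, j ∉ T₀ := by
        by_contra hcon
        push_neg at hcon
        exact hTne (Finset.eq_of_subset_of_card_le hcon (by omega))
      obtain ⟨j, hjT, hjT₀⟩ := hex
      have hjS : Fin.castSucc j ∈ S :=
        Finset.mem_union_left _ (Finset.mem_map_of_mem _ (Finset.mem_compl.mpr hjT₀))
      rw [← hgeq]
      dsimp only
      rw [← Finset.mul_prod_erase T f' hjT]
      exact Submodule.smul_mem _ _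
        (Ideal.mul_mem_right _ _ (Ideal.subset_span ⟨_, hjS, rfl⟩))
    have hnzd : ∀ a : A, g₀ * a ∈ Ideal.span (f '' ↑S) → a ∈ Ideal.span (f '' ↑S) := by
      rw [← hg₀eq]
      apply prod_nzd
      intro i hiT₀ a ha
      exact nzd_single hreg hScard (hmemS i hiT₀) a ha
    have hb : co g₀ ∈ Ideal.span (f '' ↑S) := hnzd _ (by rw [mul_comm]; exact hcg)
    rw [smul_eq_mul]
    apply mul_mem_of_mem_span hb
    rintro x ⟨j, hjS, rfl⟩
    have hg₀map : g₀ = ∏ i ∈ T₀.map Fin.castSuccEmb, f i := by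
      rw [← hg₀eq]
      dsimp only
      rw [Finset.prod_map]; rfl
    have hjnot : j ∉ T₀.map Fin.castSuccEmb := by
      rw [hSdef] at hjS
      simp only [Finset.coe_union, Finset.coe_map, Fin.coe_castSuccEmb, Finset.coe_singleton,
        Set.mem_union, Set.mem_image, Finset.mem_coe, Set.mem_singleton_iff,
        Finset.mem_compl] at hjS
      simp only [Finset.mem_map, Fin.coe_castSuccEmb]
      rintro ⟨y, hy, rfl⟩
      rcases hjS with ⟨x, hx, hxe⟩ | he
      · exact hx (by rw [Fin.castSucc_injective s hxe]; exact hy)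
      · exact absurd he (ne_of_lt (Fin.castSucc_lt_last y))
    rw [hg₀map, ← Finset.prod_insert hjnot]
    apply Ideal.subset_span
    refine ⟨insert j (T₀.map Fin.castSuccEmb), ?_, rfl⟩
    simp only [Set.mem_setOf_eq, Finset.card_insert_of_notMem hjnot, Finset.card_map]
    omega

theorem statement7 (k : Type) [Field k] [Infinite k] (n s c : ℕ)
    (hc1 : 1 ≤ c) (hcn : c ≤ n) (hcs : c ≤ s)
    (f : Fin s → MvPolynomial (Fin (n + 1)) k) (d : Fin s → ℕ)
    (hdeg : ∀ i, (f i).IsHomogeneous (d i))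
    (hreg : SubsetsRegular f (c + 1)) :
    configIdeal c f
      = Ideal.span ((fun T : Finset (Fin s) => ∏ i ∈ T, f i) ''
          {T : Finset (Fin s) | T.card = s - c + 1}) :=
  config_aux c hc1 s hcs f hreg
end

section
/- Let Δ be a matroid on [s] of dimension s−1−c, let n ≥ c, and let f_1,…,f_s ∈ R = k[x_0,…,x_n] be homogeneous polynomials such that every subset of at most c+1 of them is an R-regular sequence. Then φ_*(I_Δ) = ⋂_{F a basis of Δ} (f_i : i ∈ [s] \ F); that is, the specialization of the Stanley–Reisner ideal equals the intersection of the specializations of its minimal primes. -/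
/- ------------------------------------------------------------------
   Common definitions
------------------------------------------------------------------ -/

open MvPolynomial CategoryTheory

namespace SRSpec

variable {A : Type*} [CommRing A] {s : ℕ}

/-- span of the f_i, i ∈ S -/
def spF (f : Fin s → A) (S : Finset (Fin s)) : Ideal A := Ideal.span (f '' ↑S)

/-- specialized Stanley-Reisner ideal of Δ on ground set E -/
def srI (f : Fin s → A) (E : Finset (Fin s)) (Δ : Finset (Fin s) → Prop) : Ideal A :=
  Ideal.span ((fun F : Finset (Fin s) => ∏ i ∈ F, f i) '' {F | F ⊆ E ∧ ¬ Δ F})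

lemma mem_spF (f : Fin s → A) {S : Finset (Fin s)} {j : Fin s} (hj : j ∈ S) :
    f j ∈ spF f S :=
  Ideal.subset_span ⟨j, by simpa using hj, rfl⟩

lemma spF_mono (f : Fin s → A) {S T : Finset (Fin s)} (h : S ⊆ T) : spF f S ≤ spF f T :=
  Ideal.span_mono (Set.image_mono (by exact_mod_cast h))

lemma prod_mem_spF (f : Fin s → A) {S F : Finset (Fin s)} {j : Fin s}
    (hjF : j ∈ F) (hjS : j ∈ S) : (∏ i ∈ F, f i) ∈ spF f S := by
  rw [← Finset.mul_prod_erase F f hjF]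
  exact Ideal.mul_mem_right _ _ (mem_spF f hjS)

lemma spF_insert (f : Fin s → A) (e : Fin s) (S : Finset (Fin s)) :
    spF f (insert e S) = Ideal.span {f e} ⊔ spF f S := by
  rw [spF, Finset.coe_insert, Set.image_insert_eq, Ideal.span_insert]; rfl

lemma spF_empty (f : Fin s → A) : spF f ∅ = ⊥ := by
  simp [spF]

lemma ideal_smul_top (I : Ideal A) : I • (⊤ : Submodule A A) = I := by
  apply le_antisymm
  · exact Submodule.smul_le.mpr fun r hr n _ => by
      simpa [smul_eq_mul] using I.mul_mem_right n hr
  · intro x hx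
    simpa using Submodule.smul_mem_smul hx (Submodule.mem_top (x := (1 : A)))

/-- The key non-zerodivisor extraction from the regularity hypothesis. -/
lemma nzd {f : Fin s → A} {m : ℕ} (hreg : SubsetsRegular f m) {S : Finset (Fin s)}
    {e : Fin s} (he : e ∉ S) (hc : S.card + 1 ≤ m) {a : A}
    (ha : f e * a ∈ spF f S) : a ∈ spF f S := by
  have hnodup : (S.toList ++ [e]).Nodup := by
    simp [List.nodup_append, S.nodup_toList, he]
  have hlen : (S.toList ++ [e]).length ≤ m := by
    simp [Finset.length_toList]; omega
  have hrl := (hreg _ hnodup hlen).toIsWeaklyRegular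
  rw [List.map_append] at hrl
  rw [RingTheory.Sequence.isWeaklyRegular_append_iff] at hrl
  have h2 := hrl.2
  rw [List.map_singleton, RingTheory.Sequence.isWeaklyRegular_singleton_iff] at h2
  have hofl : Ideal.ofList (S.toList.map f) = spF f S := by
    unfold Ideal.ofList spF
    congr 1
    ext x
    simp [List.mem_map, Finset.mem_toList, eq_comm]
  rw [hofl, ideal_smul_top] at h2
  have h3 : f e • (Submodule.Quotient.mk a :
      A ⧸ (spF f S : Submodule A A)) = f e • (Submodule.Quotient.mk 0) := by
    rw [← Submodule.Quotient.mk_smul, ← Submodule.Quotient.mk_smul]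
    rw [Submodule.Quotient.eq]
    simpa [smul_eq_mul] using ha
  have := h2 h3
  rwa [Submodule.Quotient.eq, sub_zero] at this

end SRSpec

namespace SRSpec2
open SRSpec

variable {s : ℕ} {Δ : Finset (Fin s) → Prop} {e : Fin s}

/-- every face is contained in a basis -/
lemma exists_basis_superset (hmat : IsMatroid Δ) {F : Finset (Fin s)} (hF : Δ F) :
    ∃ B, IsBasisOf Δ B ∧ F ⊆ B := by
  have hfin : ({G : Finset (Fin s) | Δ G ∧ F ⊆ G}).Finite := Set.toFinite _
  obtain ⟨B, hB, hmax⟩ := Set.Finite.exists_maximalFor (fun G => G.card)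
    {G : Finset (Fin s) | Δ G ∧ F ⊆ G} hfin ⟨F, hF, subset_rfl⟩
  refine ⟨B, ⟨hB.1, fun G hG hBG => ?_⟩, hB.2⟩
  have hGmem : G ∈ {G : Finset (Fin s) | Δ G ∧ F ⊆ G} := ⟨hG, hB.2.trans hBG⟩
  have := hmax hGmem (Finset.card_le_card hBG)
  exact (Finset.eq_of_subset_of_card_le hBG this.ge).symm

lemma face_avoids (hmat : IsMatroid Δ) (hl : ¬ Δ {e}) {F : Finset (Fin s)} (hF : Δ F) :
    e ∉ F := fun he => hl (hmat.2.1 F {e} hF (Finset.singleton_subset_iff.mpr he))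

/-- loop: bases of Δ = bases of the deletion -/
lemma basis_loop (hmat : IsMatroid Δ) (hl : ¬ Δ {e}) (B : Finset (Fin s)) :
    IsBasisOf Δ B ↔ IsBasisOf (fun F => Δ F ∧ e ∉ F) B := by
  constructor
  · intro hB
    exact ⟨⟨hB.1, face_avoids hmat hl hB.1⟩, fun G hG hBG => hB.2 G hG.1 hBG⟩
  · intro hB
    exact ⟨hB.1.1, fun G hG hBG => hB.2 G ⟨hG, face_avoids hmat hl hG⟩ hBG⟩

/-- contraction basis, upward -/
lemma basis_contr_up {B₀ : Finset (Fin s)}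
    (hB₀ : IsBasisOf (fun F => e ∉ F ∧ Δ (insert e F)) B₀) :
    IsBasisOf Δ (insert e B₀) := by
  refine ⟨hB₀.1.2, fun G hG hBG => ?_⟩
  have heG : e ∈ G := hBG (Finset.mem_insert_self e B₀)
  have h1 : (fun F => e ∉ F ∧ Δ (insert e F)) (G.erase e) :=
    ⟨Finset.notMem_erase e G, by rwa [Finset.insert_erase heG]⟩
  have h2 : B₀ ⊆ G.erase e :=
    Finset.subset_erase.mpr ⟨(Finset.subset_insert e B₀).trans hBG, hB₀.1.1⟩
  have := hB₀.2 (G.erase e) h1 h2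
  rw [← Finset.insert_erase heG, this]

/-- contraction basis, downward -/
lemma basis_contr_down {B : Finset (Fin s)} (hB : IsBasisOf Δ B) (heB : e ∈ B) :
    IsBasisOf (fun F => e ∉ F ∧ Δ (insert e F)) (B.erase e) := by
  refine ⟨⟨Finset.notMem_erase e B, by rw [Finset.insert_erase heB]; exact hB.1⟩,
    fun G hG hBG => ?_⟩
  have h1 : insert e (B.erase e) ⊆ insert e G := Finset.insert_subset_insert e hBG
  rw [Finset.insert_erase heB] at h1
  have := hB.2 (insert e G) hG.2 h1
  rw [← this, Finset.erase_insert hG.1]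

/-- deletion basis, easy direction -/
lemma basis_del_easy {B : Finset (Fin s)} (hB : IsBasisOf Δ B) (heB : e ∉ B) :
    IsBasisOf (fun F => Δ F ∧ e ∉ F) B :=
  ⟨⟨hB.1, heB⟩, fun G hG hBG => hB.2 G hG.1 hBG⟩

/-- deletion basis, hard direction (needs a basis avoiding e) -/
lemma basis_del_hard (hmat : IsMatroid Δ) {c : ℕ} {E : Finset (Fin s)}
    (hdim : ∀ F, IsBasisOf Δ F → F.card + c = E.card)
    {B1 : Finset (Fin s)} (hB1 : IsBasisOf Δ B1) (heB1 : e ∉ B1)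
    {B' : Finset (Fin s)} (hB' : IsBasisOf (fun F => Δ F ∧ e ∉ F) B') :
    IsBasisOf Δ B' := by
  have hcard : B1.card ≤ B'.card := by
    by_contra h
    push_neg at h
    obtain ⟨j, hjB1, hjB', hins⟩ := hmat.2.2 B1 B' hB1.1 hB'.1.1 h
    have hje : j ≠ e := fun hh => heB1 (hh ▸ hjB1)
    have : (fun F => Δ F ∧ e ∉ F) (insert j B') :=
      ⟨hins, by simp only [Finset.mem_insert, not_or]; exact ⟨fun hh => hje hh.symm, hB'.1.2⟩⟩
    have := hB'.2 _ this (Finset.subset_insert j B')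
    exact hjB' (this ▸ Finset.mem_insert_self j B')
  obtain ⟨B₂, hB₂, hsub⟩ := exists_basis_superset hmat hB'.1.1
  have h1 := hdim B1 hB1
  have h2 := hdim B₂ hB₂
  have : B' = B₂ := Finset.eq_of_subset_of_card_le hsub (by omega)
  exact this ▸ hB₂

end SRSpec2

namespace SRSpec3
open SRSpec SRSpec2

variable {A : Type*} [CommRing A] {s : ℕ} (f : Fin s → A)
variable {Δ : Finset (Fin s) → Prop} {e : Fin s} {E : Finset (Fin s)}

lemma prod_mem_srI {F : Finset (Fin s)} (hFE : F ⊆ E) (hnF : ¬ Δ F) :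
    (∏ i ∈ F, f i) ∈ srI f E Δ :=
  Ideal.subset_span ⟨F, ⟨hFE, hnF⟩, rfl⟩

/-- d1 : deletion SR ideal included in SR ideal -/
lemma srI_del_le (he : e ∈ E) :
    srI f (E.erase e) (fun F => Δ F ∧ e ∉ F) ≤ srI f E Δ := by
  rw [srI, Ideal.span_le]
  rintro x ⟨F, ⟨hFE, hnF⟩, rfl⟩
  have heF : e ∉ F := fun h => (Finset.mem_erase.mp (hFE h)).1 rfl
  exact prod_mem_srI f (hFE.trans (Finset.erase_subset e E)) (fun h => hnF ⟨h, heF⟩)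

/-- d2 : f e times contraction SR ideal lands in SR ideal -/
lemma srI_contr_mul_le (he : e ∈ E) {w : A}
    (hw : w ∈ srI f (E.erase e) (fun F => e ∉ F ∧ Δ (insert e F))) :
    f e * w ∈ srI f E Δ := by
  induction hw using Submodule.span_induction with
  | mem x hx =>
      obtain ⟨F, ⟨hFE, hnF⟩, rfl⟩ := hx
      have heF : e ∉ F := fun h => (Finset.mem_erase.mp (hFE h)).1 rfl
      have : f e * ∏ i ∈ F, f i = ∏ i ∈ insert e F, f i :=
        (Finset.prod_insert heF).symm
      rw [this]
      refine prod_mem_srI f (Finset.insert_subset he (hFE.trans (Finset.erase_subset e E)))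
        (fun h => hnF ⟨heF, h⟩)
  | zero => simpa using Ideal.zero_mem _
  | add x y _ _ hx hy => rw [mul_add]; exact Ideal.add_mem _ hx hy
  | smul a x _ hx =>
      rw [smul_eq_mul, show f e * (a * x) = a * (f e * x) by ring]
      exact Ideal.mul_mem_left _ _ hx

/-- d3 : SR ideal included in contraction SR ideal -/
lemma srI_le_contr (hmat : IsMatroid Δ) (he : e ∈ E) :
    srI f E Δ ≤ srI f (E.erase e) (fun F => e ∉ F ∧ Δ (insert e F)) := by
  rw [srI, Ideal.span_le]
  rintro x ⟨F, ⟨hFE, hnF⟩, rfl⟩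
  dsimp only
  by_cases heF : e ∈ F
  · rw [← Finset.mul_prod_erase F f heF]
    refine Ideal.mul_mem_left _ _ (prod_mem_srI f ?_ ?_)
    · exact Finset.erase_subset_erase e hFE
    · rintro ⟨-, hins⟩
      rw [Finset.insert_erase heF] at hins
      exact hnF hins
  · refine prod_mem_srI f (Finset.subset_erase.mpr ⟨hFE, heF⟩) ?_
    rintro ⟨-, hins⟩
    exact hnF (hmat.2.1 _ F hins (Finset.subset_insert e F))

/-- d4 : SR ideal included in deletion SR ideal + (f e) -/
lemma srI_le_del_sup (he : e ∈ E) :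
    srI f E Δ ≤ srI f (E.erase e) (fun F => Δ F ∧ e ∉ F) ⊔ Ideal.span {f e} := by
  rw [srI, Ideal.span_le]
  rintro x ⟨F, ⟨hFE, hnF⟩, rfl⟩
  by_cases heF : e ∈ F
  · refine le_sup_right (α := Ideal A) ?_
    exact Ideal.mem_span_singleton.mpr (Finset.dvd_prod_of_mem f heF)
  · refine le_sup_left (α := Ideal A) ?_
    exact prod_mem_srI f (Finset.subset_erase.mpr ⟨hFE, heF⟩) (fun h => hnF h.1)

/-- loop decomposition -/
lemma srI_loop (hmat : IsMatroid Δ) (he : e ∈ E) (hl : ¬ Δ {e}) :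
    srI f E Δ = srI f (E.erase e) (fun F => Δ F ∧ e ∉ F) ⊔ Ideal.span {f e} := by
  refine le_antisymm (srI_le_del_sup f he) (sup_le (srI_del_le f he) ?_)
  rw [Ideal.span_le, Set.singleton_subset_iff]
  have : f e = ∏ i ∈ ({e} : Finset (Fin s)), f i := by simp
  rw [this]
  exact prod_mem_srI f (Finset.singleton_subset_iff.mpr he) hl

/-- d5 : coloop: contraction SR ideal included in SR ideal -/
lemma srI_contr_le_coloop (he : e ∈ E) (hco : ∀ F, Δ F → Δ (insert e F)) :
    srI f (E.erase e) (fun F => e ∉ F ∧ Δ (insert e F)) ≤ srI f E Δ := by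
  rw [srI, Ideal.span_le]
  rintro x ⟨F, ⟨hFE, hnF⟩, rfl⟩
  have heF : e ∉ F := fun h => (Finset.mem_erase.mp (hFE h)).1 rfl
  refine prod_mem_srI f (hFE.trans (Finset.erase_subset e E)) (fun h => hnF ⟨heF, hco F h⟩)

/-- matroid instance: deletion -/
lemma matroid_del (hmat : IsMatroid Δ) : IsMatroid (fun F => Δ F ∧ e ∉ F) := by
  refine ⟨⟨hmat.1, Finset.notMem_empty e⟩, ?_, ?_⟩
  · exact fun F G hF hGF => ⟨hmat.2.1 F G hF.1 hGF, fun h => hF.2 (hGF h)⟩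
  · intro F G hF hG hlt
    obtain ⟨j, hjF, hjG, hins⟩ := hmat.2.2 F G hF.1 hG.1 hlt
    refine ⟨j, hjF, hjG, hins, ?_⟩
    simp only [Finset.mem_insert, not_or]
    exact ⟨fun hh => hF.2 (hh ▸ hjF), hG.2⟩

/-- matroid instance: contraction (e not a loop) -/
lemma matroid_contr (hmat : IsMatroid Δ) (hnl : Δ {e}) :
    IsMatroid (fun F => e ∉ F ∧ Δ (insert e F)) := by
  refine ⟨⟨Finset.notMem_empty e, by simpa using hnl⟩, ?_, ?_⟩
  · exact fun F G hF hGF =>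
      ⟨fun h => hF.1 (hGF h), hmat.2.1 _ _ hF.2 (Finset.insert_subset_insert e hGF)⟩
  · intro F G hF hG hlt
    obtain ⟨j, hj, hjG, hins⟩ := hmat.2.2 (insert e F) (insert e G) hF.2 hG.2
      (by rw [Finset.card_insert_of_notMem hF.1, Finset.card_insert_of_notMem hG.1]; omega)
    have hje : j ≠ e := fun h => hjG (h ▸ Finset.mem_insert_self e G)
    have hjF : j ∈ F := by
      rcases Finset.mem_insert.mp hj with h | h
      · exact absurd h hje
      · exact h
    refine ⟨j, hjF, fun h => hjG (Finset.mem_insert_of_mem h), ?_, ?_⟩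
    · simp only [Finset.mem_insert, not_or]
      exact ⟨fun hh => hje hh.symm, hG.1⟩
    · rwa [Finset.insert_comm]

end SRSpec3

namespace SRSpec4
open SRSpec SRSpec2 SRSpec3

variable {A : Type*} [CommRing A] {s : ℕ}

lemma mem_iInf₂ {ι : Type*} {S : Set ι} {g : ι → Ideal A} {x : A} :
    (x ∈ ⨅ i ∈ S, g i) ↔ ∀ i ∈ S, x ∈ g i := by
  simp [Submodule.mem_iInf]

lemma key_empty (f : Fin s → A) (D : Finset (Fin s)) (Δ : Finset (Fin s) → Prop)
    (hfaces : ∀ F, Δ F → F ⊆ (∅ : Finset (Fin s))) (hmat : IsMatroid Δ) :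
    (⨅ B ∈ {B : Finset (Fin s) | IsBasisOf Δ B}, spF f (((∅ : Finset (Fin s)) \ B) ∪ D))
      = srI f ∅ Δ ⊔ spF f D := by
  have hset : {B : Finset (Fin s) | IsBasisOf Δ B} = {∅} := by
    ext B
    simp only [Set.mem_setOf_eq, Set.mem_singleton_iff]
    constructor
    · intro hB; exact Finset.subset_empty.mp (hfaces B hB.1)
    · rintro rfl
      exact ⟨hmat.1, fun G hG _ => Finset.subset_empty.mp (hfaces G hG)⟩
  have hsr : srI f ∅ Δ = ⊥ := by
    rw [srI]
    have : {F : Finset (Fin s) | F ⊆ ∅ ∧ ¬ Δ F} = ∅ := by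
      ext F
      simp only [Set.mem_setOf_eq, Set.mem_empty_iff_false, iff_false, not_and, not_not]
      intro h
      rw [Finset.subset_empty.mp h]
      exact hmat.1
    rw [this]
    simp
  rw [hset, hsr]
  simp

theorem key (f : Fin s → A) (m : ℕ) :
    ∀ (E D : Finset (Fin s)) (c : ℕ) (Δ : Finset (Fin s) → Prop),
      E.card ≤ m → Disjoint E D →
      (∀ F, Δ F → F ⊆ E) → IsMatroid Δ →
      (∀ F, IsBasisOf Δ F → F.card + c = E.card) →
      SubsetsRegular f (c + D.card + 1) →
      (⨅ B ∈ {B : Finset (Fin s) | IsBasisOf Δ B}, spF f ((E \ B) ∪ D))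
        = srI f E Δ ⊔ spF f D := by
  induction m with
  | zero =>
    intro E D c Δ hcard hdisj hfaces hmat hdim hreg
    have hE : E = ∅ := Finset.card_eq_zero.mp (Nat.le_zero.mp hcard)
    subst hE
    exact key_empty f D Δ hfaces hmat
  | succ m ih =>
    intro E D c Δ hcard hdisj hfaces hmat hdim hreg
    by_cases hEe : E = ∅
    · subst hEe; exact key_empty f D Δ hfaces hmat
    obtain ⟨e, he⟩ := Finset.nonempty_iff_ne_empty.mpr hEe
    have hE'card : (E.erase e).card + 1 = E.card := Finset.card_erase_add_one he
    have hE'le : (E.erase e).card ≤ m := by omega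
    have hE'sub : E.erase e ⊆ E := Finset.erase_subset e E
    have hDe : e ∉ D := Finset.disjoint_left.mp hdisj he
    obtain ⟨Bx, hBx, -⟩ := exists_basis_superset hmat hmat.1
    by_cases hloop : Δ {e}
    · -- e is not a loop
      have hmatc := matroid_contr hmat hloop
      have hfacesc : ∀ F, (fun F => e ∉ F ∧ Δ (insert e F)) F → F ⊆ E.erase e := fun F hF =>
        Finset.subset_erase.mpr
          ⟨hfaces _ (hmat.2.1 _ F hF.2 (Finset.subset_insert e F)), hF.1⟩
      have hdimc : ∀ F, IsBasisOf (fun F => e ∉ F ∧ Δ (insert e F)) F →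
          F.card + c = (E.erase e).card := by
        intro F hF
        have h1 := hdim _ (basis_contr_up hF)
        rw [Finset.card_insert_of_notMem hF.1.1] at h1
        omega
      have hdisjc : Disjoint (E.erase e) D := Finset.disjoint_of_subset_left hE'sub hdisj
      have IHc := ih (E.erase e) D c (fun F => e ∉ F ∧ Δ (insert e F))
        hE'le hdisjc hfacesc hmatc hdimc hreg
      have heq1 : ∀ B₀ : Finset (Fin s), E \ insert e B₀ = (E.erase e) \ B₀ := by
        intro B₀; ext i; simp only [Finset.mem_sdiff, Finset.mem_insert, Finset.mem_erase,
          not_or]; tauto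
      have heq2 : ∀ B : Finset (Fin s), e ∈ B → E \ B = (E.erase e) \ B.erase e := by
        intro B heB; ext i
        by_cases hi : i = e
        · subst hi; simp [heB]
        · simp only [Finset.mem_sdiff, Finset.mem_erase, hi]; tauto
      by_cases hco : ∀ B, IsBasisOf Δ B → e ∈ B
      · -- COLOOP CASE
        have hcoF : ∀ F, Δ F → Δ (insert e F) := by
          intro F hF
          obtain ⟨B, hB, hFB⟩ := exists_basis_superset hmat hF
          exact hmat.2.1 B _ hB.1 (Finset.insert_subset (hco B hB) hFB)
        calc (⨅ B ∈ {B : Finset (Fin s) | IsBasisOf Δ B}, spF f ((E \ B) ∪ D))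
            = (⨅ B ∈ {B : Finset (Fin s) | IsBasisOf (fun F => e ∉ F ∧ Δ (insert e F)) B},
                spF f (((E.erase e) \ B) ∪ D)) := by
              refine le_antisymm (le_iInf₂ fun B₀ hB₀ => ?_) (le_iInf₂ fun B hB => ?_)
              · exact (iInf₂_le (insert e B₀) (basis_contr_up hB₀)).trans
                  (le_of_eq (by rw [heq1 B₀]))
              · exact (iInf₂_le (B.erase e) (basis_contr_down hB (hco B hB))).trans
                  (le_of_eq (by rw [heq2 B (hco B hB)]))
          _ = srI f (E.erase e) (fun F => e ∉ F ∧ Δ (insert e F)) ⊔ spF f D := IHc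
          _ = srI f E Δ ⊔ spF f D := by
              rw [le_antisymm (srI_le_contr f hmat he) (srI_contr_le_coloop f he hcoF)]
      · -- MIXED CASE
        push_neg at hco
        obtain ⟨B1, hB1, heB1⟩ := hco
        have hB1E' : B1 ⊆ E.erase e := Finset.subset_erase.mpr ⟨hfaces B1 hB1.1, heB1⟩
        have hc1 : 1 ≤ c := by
          have h1 := hdim B1 hB1
          have := Finset.card_le_card hB1E'
          omega
        have hmatd := matroid_del (e := e) hmat
        have hfacesd : ∀ F, (fun F => Δ F ∧ e ∉ F) F → F ⊆ E.erase e :=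
          fun F hF => Finset.subset_erase.mpr ⟨hfaces F hF.1, hF.2⟩
        have hdimd : ∀ F, IsBasisOf (fun F => Δ F ∧ e ∉ F) F →
            F.card + (c - 1) = (E.erase e).card := by
          intro F hF
          have h1 := hdim F (basis_del_hard hmat hdim hB1 heB1 hF)
          omega
        have hdisjd : Disjoint (E.erase e) (insert e D) := by
          rw [Finset.disjoint_left]
          intro i hi
          simp only [Finset.mem_insert, not_or]
          exact ⟨(Finset.mem_erase.mp hi).1,
            fun hiD => Finset.disjoint_left.mp hdisj (hE'sub hi) hiD⟩
        have hregd : SubsetsRegular f ((c - 1) + (insert e D).card + 1) := by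
          have hh : (c - 1) + (insert e D).card + 1 = c + D.card + 1 := by
            rw [Finset.card_insert_of_notMem hDe]; omega
          rw [hh]; exact hreg
        have IHd := ih (E.erase e) (insert e D) (c - 1) (fun F => Δ F ∧ e ∉ F)
          hE'le hdisjd hfacesd hmatd hdimd hregd
        have heq3 : ∀ B : Finset (Fin s), e ∉ B →
            (E \ B) ∪ D = ((E.erase e) \ B) ∪ insert e D := by
          intro B heB
          ext i
          by_cases hi : i = e
          · subst hi; simp [he, heB]
          · simp only [Finset.mem_union, Finset.mem_sdiff, Finset.mem_erase, hi,
              Finset.mem_insert]; tauto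
        have hsplit : (⨅ B ∈ {B : Finset (Fin s) | IsBasisOf Δ B}, spF f ((E \ B) ∪ D))
            = (srI f (E.erase e) (fun F => e ∉ F ∧ Δ (insert e F)) ⊔ spF f D)
              ⊓ (srI f (E.erase e) (fun F => Δ F ∧ e ∉ F) ⊔ spF f (insert e D)) := by
          rw [← IHc, ← IHd]
          refine le_antisymm (le_inf (le_iInf₂ fun B₀ hB₀ => ?_) (le_iInf₂ fun B' hB' => ?_))
            (le_iInf₂ fun B hB => ?_)
          · exact (iInf₂_le (insert e B₀) (basis_contr_up hB₀)).trans
              (le_of_eq (by rw [heq1 B₀]))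
          · exact (iInf₂_le B' (basis_del_hard hmat hdim hB1 heB1 hB')).trans
              (le_of_eq (by rw [heq3 B' hB'.1.2]))
          · by_cases heB : e ∈ B
            · exact inf_le_left.trans ((iInf₂_le (B.erase e) (basis_contr_down hB heB)).trans
                (le_of_eq (by rw [heq2 B heB])))
            · exact inf_le_right.trans ((iInf₂_le B (basis_del_easy hB heB)).trans
                (le_of_eq (by rw [heq3 B heB])))
        rw [hsplit]
        refine le_antisymm ?_ (le_inf ?_ ?_)
        · -- hard inclusion
          intro x hx
          obtain ⟨hxc, hxd⟩ := Submodule.mem_inf.mp hx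
          rw [Submodule.mem_sup] at hxd
          obtain ⟨v, hv, γ', hγ', hsum⟩ := hxd
          rw [spF_insert, Submodule.mem_sup] at hγ'
          obtain ⟨t, ht, γ, hγ, ht2⟩ := hγ'
          rw [Ideal.mem_span_singleton] at ht
          obtain ⟨h, rfl⟩ := ht
          have hvc : v ∈ srI f (E.erase e) (fun F => e ∉ F ∧ Δ (insert e F)) :=
            srI_le_contr f hmat he (srI_del_le f he hv)
          have hy : f e * h ∈ (⨅ B₀ ∈ {B : Finset (Fin s) |
              IsBasisOf (fun F => e ∉ F ∧ Δ (insert e F)) B}, spF f (((E.erase e) \ B₀) ∪ D)) := by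
            rw [IHc]
            have hyy : f e * h = x - v - γ := by rw [← hsum, ← ht2]; ring
            rw [hyy]
            exact Submodule.sub_mem _ (Submodule.sub_mem _ hxc (Submodule.mem_sup_left hvc))
              (Submodule.mem_sup_right hγ)
          have hh : h ∈ srI f (E.erase e) (fun F => e ∉ F ∧ Δ (insert e F)) ⊔ spF f D := by
            rw [← IHc]
            rw [mem_iInf₂]
            intro B₀ hB₀
            have hyB := mem_iInf₂.mp hy B₀ hB₀
            refine nzd hreg ?_ ?_ hyB
            · simp only [Finset.mem_union, Finset.mem_sdiff, Finset.mem_erase, not_or, not_and]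
              exact ⟨fun hh' => absurd rfl hh'.1, hDe⟩
            · have hB₀E : B₀ ⊆ E.erase e := hfacesc B₀ hB₀.1
              have hcd : ((E.erase e) \ B₀).card = c := by
                rw [Finset.card_sdiff_of_subset hB₀E]
                have := hdimc B₀ hB₀
                omega
              have hdisj2 : Disjoint ((E.erase e) \ B₀) D :=
                Finset.disjoint_of_subset_left ((Finset.sdiff_subset).trans hE'sub) hdisj
              rw [Finset.card_union_of_disjoint hdisj2, hcd]
          rw [Submodule.mem_sup] at hh
          obtain ⟨w, hw, γ₂, hγ₂, hwsum⟩ := hh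
          rw [Submodule.mem_sup]
          refine ⟨v + f e * w, ?_, γ + f e * γ₂, ?_, ?_⟩
          · exact Ideal.add_mem _ (srI_del_le f he hv) (srI_contr_mul_le f he hw)
          · exact Ideal.add_mem _ hγ (Ideal.mul_mem_left _ _ hγ₂)
          · rw [← hsum, ← ht2, ← hwsum]; ring
        · exact sup_le ((srI_le_contr f hmat he).trans le_sup_left) le_sup_right
        · refine sup_le ((srI_le_del_sup f he).trans (sup_le le_sup_left ?_))
            ((spF_mono f (Finset.subset_insert e D)).trans le_sup_right)
          refine le_trans ?_ le_sup_right
          rw [Ideal.span_le, Set.singleton_subset_iff]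
          exact mem_spF f (Finset.mem_insert_self e D)
    · -- LOOP CASE
      have hmatd := matroid_del (e := e) hmat
      have hfacesd : ∀ F, (fun F => Δ F ∧ e ∉ F) F → F ⊆ E.erase e :=
        fun F hF => Finset.subset_erase.mpr ⟨hfaces F hF.1, hF.2⟩
      have hc1 : 1 ≤ c := by
        have h1 := hdim Bx hBx
        have h2 : Bx ⊆ E.erase e :=
          Finset.subset_erase.mpr ⟨hfaces Bx hBx.1, face_avoids hmat hloop hBx.1⟩
        have := Finset.card_le_card h2
        omega
      have hdimd : ∀ F, IsBasisOf (fun F => Δ F ∧ e ∉ F) F →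
          F.card + (c - 1) = (E.erase e).card := by
        intro F hF
        have h1 := hdim F ((basis_loop hmat hloop F).mpr hF)
        omega
      have hdisjd : Disjoint (E.erase e) (insert e D) := by
        rw [Finset.disjoint_left]
        intro i hi
        simp only [Finset.mem_insert, not_or]
        exact ⟨(Finset.mem_erase.mp hi).1,
          fun hiD => Finset.disjoint_left.mp hdisj (hE'sub hi) hiD⟩
      have hregd : SubsetsRegular f ((c - 1) + (insert e D).card + 1) := by
        have hh : (c - 1) + (insert e D).card + 1 = c + D.card + 1 := by
          rw [Finset.card_insert_of_notMem hDe]; omega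
        rw [hh]; exact hreg
      have IH := ih (E.erase e) (insert e D) (c - 1) (fun F => Δ F ∧ e ∉ F)
        hE'le hdisjd hfacesd hmatd hdimd hregd
      have hfins : ∀ B : Finset (Fin s), e ∉ B →
          (E \ B) ∪ D = ((E.erase e) \ B) ∪ insert e D := by
        intro B heB
        ext i
        by_cases hi : i = e
        · subst hi; simp [he, heB]
        · simp only [Finset.mem_union, Finset.mem_sdiff, Finset.mem_erase, hi,
            Finset.mem_insert]; tauto
      calc (⨅ B ∈ {B : Finset (Fin s) | IsBasisOf Δ B}, spF f ((E \ B) ∪ D))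
          = (⨅ B ∈ {B : Finset (Fin s) | IsBasisOf (fun F => Δ F ∧ e ∉ F) B},
              spF f (((E.erase e) \ B) ∪ insert e D)) := by
            refine le_antisymm (le_iInf₂ fun B hB => ?_) (le_iInf₂ fun B hB => ?_)
            · exact (iInf₂_le B ((basis_loop hmat hloop B).mpr hB)).trans
                (le_of_eq (by rw [hfins B hB.1.2]))
            · exact (iInf₂_le B ((basis_loop hmat hloop B).mp hB)).trans
                (le_of_eq (by rw [hfins B ((basis_loop hmat hloop B).mp hB).1.2]))
        _ = srI f (E.erase e) (fun F => Δ F ∧ e ∉ F) ⊔ spF f (insert e D) := IH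
        _ = srI f E Δ ⊔ spF f D := by
            rw [spF_insert, srI_loop f hmat he hloop, sup_assoc]

end SRSpec4


theorem statement10 (k : Type) [Field k] [Infinite k] (s c n : ℕ) (hcs : c ≤ s) (hcn : c ≤ n)
    (Δ : Finset (Fin s) → Prop) (hmat : IsMatroid Δ)
    (hdim : ∀ F, IsBasisOf Δ F → F.card = s - c)
    (f : Fin s → MvPolynomial (Fin (n + 1)) k) (d : Fin s → ℕ)
    (hdeg : ∀ i, (f i).IsHomogeneous (d i))
    (hreg : SubsetsRegular f (c + 1)) :
    Ideal.map (MvPolynomial.aeval (R := k) f).toRingHom (stanleyReisnerIdeal k Δ)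
      = ⨅ F ∈ {F : Finset (Fin s) | IsBasisOf Δ F}, Ideal.span (f '' ↑(Fᶜ)) := by
  
  classical
  have hmap : Ideal.map (MvPolynomial.aeval (R := k) f).toRingHom (stanleyReisnerIdeal k Δ)
      = SRSpec.srI f Finset.univ Δ := by
    rw [stanleyReisnerIdeal, Ideal.map_span, SRSpec.srI, Set.image_image]
    congr 1
    have hs1 : {F : Finset (Fin s) | F ⊆ Finset.univ ∧ ¬ Δ F} = {F | ¬ Δ F} := by
      ext F; simp
    rw [hs1]
    apply Set.image_congr
    intro F _
    simp [map_prod]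
  have hdim' : ∀ F, IsBasisOf Δ F → F.card + c = (Finset.univ : Finset (Fin s)).card := by
    intro F hF
    rw [hdim F hF, Finset.card_univ, Fintype.card_fin]
    omega
  have hreg' : SubsetsRegular f (c + (∅ : Finset (Fin s)).card + 1) := by
    simpa using hreg
  have hkey := SRSpec4.key f s Finset.univ ∅ c Δ
    (by rw [Finset.card_univ, Fintype.card_fin]) (Finset.disjoint_empty_right _)
    (fun F _ => Finset.subset_univ F) hmat hdim' hreg'
  simp only [Finset.union_empty, SRSpec.spF_empty, sup_bot_eq,
    ← Finset.compl_eq_univ_sdiff] at hkey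
  rw [hmap, ← hkey]
  rfl
end
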